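/- arXiv:0803.3309 — 3 statements merged into one kernel-verified Lean document; each statement's English description precedes it below -/
import Mathlib

section
/- Let k ∈ ℕ, k ≥ 1, and let φ ∈ C_c^∞(ℝ). For every x ∈ ℝ \ supp φ, the integral ∫_ℝ R^{(k,k)}(x,y) φ(y) dy converges absolutely and ((d/dx)+x)^k H^{-k/2} φ(x) = ∫_ℝ R^{(k,k)}(x,y) φ(y) dy. -/
open MeasureTheory Real Set Filter Topology

noncomputable section

/-- Modified Bessel function of the first kind of order `a`. -/
def besselI (a z : ℝ) : ℝ :=
  ∑' n : ℕ, (z / 2) ^ (2 * (n : ℝ) + a) / (Nat.factorial n * Real.Gamma ((n : ℝ) + a + 1))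

/-- The Laguerre heat kernel `W_t^α(x,y)`. -/
def laguerreHeat (a t x y : ℝ) : ℝ :=
  (2 * Real.exp (-t) / (1 - Real.exp (-2 * t))) ^ ((1 : ℝ) / 2) *
    (2 * x * y * Real.exp (-t) / (1 - Real.exp (-2 * t))) ^ ((1 : ℝ) / 2) *
    besselI a (2 * x * y * Real.exp (-t) / (1 - Real.exp (-2 * t))) *
    Real.exp (-((1 / 2) * (x ^ 2 + y ^ 2) * ((1 + Real.exp (-2 * t)) / (1 - Real.exp (-2 * t)))))

/-- The first-order Laguerre derivative operator `𝔇_α f = f' + (x - (α+1/2)/x) f`. -/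
def Dop (a : ℝ) (f : ℝ → ℝ) : ℝ → ℝ :=
  fun x => deriv f x + (x - (a + 1 / 2) / x) * f x

/-- The `k`-th Laguerre Riesz kernel `R_α^{(k)}(x,y)`. -/
def rieszKernelL (a : ℝ) (k : ℕ) (x y : ℝ) : ℝ :=
  (1 / Real.Gamma ((k : ℝ) / 2)) *
    ∫ t in Set.Ioi (0 : ℝ),
      t ^ ((k : ℝ) / 2 - 1) * ((Dop a)^[k] (fun u => laguerreHeat a t u y)) x

/-- The kernel `K_{α,k}(x,y)` of the negative power `L_α^{-k/2}`. -/
def laguerreK (a : ℝ) (k : ℕ) (x y : ℝ) : ℝ :=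
  (1 / Real.Gamma ((k : ℝ) / 2)) *
    ∫ t in Set.Ioi (0 : ℝ), t ^ ((k : ℝ) / 2 - 1) * laguerreHeat a t x y

/-- The negative power `L_α^{-k/2}` of the Laguerre operator, on test functions. -/
def Linv (a : ℝ) (k : ℕ) (φ : ℝ → ℝ) (x : ℝ) : ℝ :=
  ∫ y in Set.Ioi (0 : ℝ), laguerreK a k x y * φ y

/-- The Hermite heat kernel `W_t(x,y)`. -/
def hermiteHeat (t x y : ℝ) : ℝ :=
  (Real.exp (-t) / (1 - Real.exp (-2 * t))) ^ ((1 : ℝ) / 2) / Real.sqrt Real.pi *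
    Real.exp (-((1 / 2) * (x ^ 2 + y ^ 2) * ((1 + Real.exp (-2 * t)) / (1 - Real.exp (-2 * t)))) +
      2 * x * y * Real.exp (-t) / (1 - Real.exp (-2 * t)))

/-- The first-order Hermite derivative operator `f ↦ f' + x f`. -/
def Dh (f : ℝ → ℝ) : ℝ → ℝ := fun x => deriv f x + x * f x

/-- The `k`-th Hermite Riesz kernel `R^{(k)}(x,y)`. -/
def rieszKernelH (k : ℕ) (x y : ℝ) : ℝ :=
  (1 / Real.Gamma ((k : ℝ) / 2)) *
    ∫ t in Set.Ioi (0 : ℝ), t ^ ((k : ℝ) / 2 - 1) * (Dh^[k] (fun u => hermiteHeat t u y)) x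

/-- The intermediate Hermite kernel `R^{(k,l)}(x,y)`. -/
def rieszKernelHl (k l : ℕ) (x y : ℝ) : ℝ :=
  (1 / Real.Gamma ((k : ℝ) / 2)) *
    ∫ t in Set.Ioi (0 : ℝ), t ^ ((k : ℝ) / 2 - 1) * (Dh^[l] (fun u => hermiteHeat t u y)) x

/-- The kernel `K_k(x,y)` of the negative power `H^{-k/2}`. -/
def hermiteK (k : ℕ) (x y : ℝ) : ℝ :=
  (1 / Real.Gamma ((k : ℝ) / 2)) *
    ∫ t in Set.Ioi (0 : ℝ), t ^ ((k : ℝ) / 2 - 1) * hermiteHeat t x y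

/-- The negative power `H^{-k/2}` of the Hermite operator, on test functions. -/
def Hinv (k : ℕ) (φ : ℝ → ℝ) (x : ℝ) : ℝ := ∫ y, hermiteK k x y * φ y

/-- The measure on `(0,∞)` with density `x^δ` with respect to Lebesgue measure. -/
def weightedMeasure (δ : ℝ) : Measure ℝ :=
  (volume.restrict (Set.Ioi 0)).withDensity fun x => ENNReal.ofReal (x ^ δ)

/-- The constant `E_{N,l} = 2^{N-2l} N! / (l! (N-2l)!)`. -/
def Econst (N l : ℕ) : ℝ :=
  2 ^ (N - 2 * l) * Nat.factorial N / (Nat.factorial l * Nat.factorial (N - 2 * l))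

/-- The Hankel symbol `[b,r]`. -/
def hankel (b : ℝ) (r : ℕ) : ℝ :=
  (∏ i ∈ Finset.range r, (4 * b ^ 2 - (2 * (i : ℝ) + 1) ^ 2)) /
    (2 ^ (2 * r) * Nat.factorial r)

/-- The function `Φ` from the proof of the Hermite principal value result. -/
def Phi (k : ℕ) (x : ℝ) : ℝ :=
  (1 / Real.Gamma ((k : ℝ) / 2)) *
    ∫ s in Set.Ioo (0 : ℝ) (1 / 2),
      ((2 * s) ^ ((k : ℝ) / 2 - 1) / Real.sqrt (Real.pi * s)) *
        iteratedDeriv (k - 1) (fun u : ℝ => Real.exp (-u ^ 2 / (4 * s))) x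

end

noncomputable section




lemma natlt_top (l : ℕ) : (l : WithTop ℕ∞) < ((⊤ : ℕ∞) : WithTop ℕ∞) := by
  exact_mod_cast lt_top_iff_ne_top.2 (by simp : (l : ℕ∞) ≠ ⊤)

lemma iterDeriv_cmul (c : ℝ) {f : ℝ → ℝ} (hf : ContDiff ℝ (⊤ : ℕ∞) f) (l : ℕ) (x : ℝ) :
    iteratedDeriv l (fun u => c * f u) x = c * iteratedDeriv l f x := by
  rw [iteratedDeriv_eq_iteratedFDeriv, iteratedDeriv_eq_iteratedFDeriv]
  have h : (fun u => c * f u) = c • f := by funext u; simp [smul_eq_mul]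
  rw [h, iteratedFDeriv_const_smul_apply (hf.of_le ((natlt_top l).le)).contDiffAt]
  simp

lemma dh_iterate {g : ℝ → ℝ} (hg : ContDiff ℝ (⊤ : ℕ∞) g) (l : ℕ) :
    Dh^[l] g = fun x => Real.exp (-(x ^ 2 / 2)) *
      iteratedDeriv l (fun u => Real.exp (u ^ 2 / 2) * g u) x := by
  have hψ : ContDiff ℝ (⊤ : ℕ∞) (fun u : ℝ => Real.exp (u ^ 2 / 2) * g u) :=
    (((contDiff_id.pow 2).div_const 2).exp).mul hg
  induction l with
  | zero =>
    funext x
    simp [Function.iterate_zero_apply, iteratedDeriv_zero, ← mul_assoc, ← Real.exp_add]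
  | succ l ih =>
    funext x
    have h1 : HasDerivAt (fun x : ℝ => Real.exp (-(x ^ 2 / 2))) (-x * Real.exp (-(x ^ 2 / 2))) x := by
      have h0 : HasDerivAt (fun x : ℝ => -(x ^ 2 / 2)) (-x) x := by
        simpa using ((hasDerivAt_pow 2 x).div_const 2).fun_neg
      simpa [mul_comm] using h0.exp
    have hd : Differentiable ℝ (iteratedDeriv l (fun u : ℝ => Real.exp (u ^ 2 / 2) * g u)) :=
      hψ.differentiable_iteratedDeriv l (natlt_top l)
    have h2 : HasDerivAt (iteratedDeriv l (fun u : ℝ => Real.exp (u ^ 2 / 2) * g u))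
        (iteratedDeriv (l + 1) (fun u : ℝ => Real.exp (u ^ 2 / 2) * g u) x) x := by
      rw [iteratedDeriv_succ]
      exact (hd x).hasDerivAt
    rw [Function.iterate_succ_apply', ih]
    show Dh (fun x => Real.exp (-(x ^ 2 / 2)) *
        iteratedDeriv l (fun u => Real.exp (u ^ 2 / 2) * g u) x) x = _
    unfold Dh
    rw [(h1.fun_mul h2).deriv]
    ring

lemma iter_gauss (l : ℕ) (b m x : ℝ) :
    iteratedDeriv l (fun u => Real.exp (-((b * (u - m)) ^ 2 / 2))) x
      = (-1 : ℝ) ^ l * b ^ l * (Polynomial.aeval (b * (x - m)) (Polynomial.hermite l)) *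
        Real.exp (-((b * (x - m)) ^ 2 / 2)) := by
  have hf : ContDiff ℝ (l : ℕ∞) (fun v : ℝ => Real.exp (-(v ^ 2 / 2))) :=
    (((contDiff_id.pow 2).div_const 2).neg).exp
  have h3 := iteratedDeriv_comp_add_const l
    (fun v : ℝ => Real.exp (-((b * v) ^ 2 / 2))) (-m)
  have h4 := iteratedDeriv_comp_const_mul hf b
  have e1 : (fun u : ℝ => Real.exp (-((b * (u - m)) ^ 2 / 2)))
      = fun z : ℝ => Real.exp (-((b * (z + -m)) ^ 2 / 2)) := by
    funext u; ring_nf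
  rw [e1]
  have h3' := congrFun h3 x
  rw [h3']
  have h4' := congrFun h4 (x + -m)
  rw [h4', iteratedDeriv_eq_iterate, Polynomial.deriv_gaussian_eq_hermite_mul_gaussian]
  have : b * (x + -m) = b * (x - m) := by ring
  rw [this]; ring



def bF (t : ℝ) : ℝ := Real.sqrt (2 * Real.exp (-2 * t) / (1 - Real.exp (-2 * t)))

def cF (t : ℝ) : ℝ := (Real.exp (-t) / (1 - Real.exp (-2 * t))) ^ ((1 : ℝ) / 2) / Real.sqrt Real.pi

def PsiE (l : ℕ) (t x y : ℝ) : ℝ :=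
  cF t * ((-1 : ℝ) ^ l * bF t ^ l *
      (Polynomial.aeval (bF t * (x - y * Real.exp t)) (Polynomial.hermite l))) *
    (Real.exp (y ^ 2 / 2) * Real.exp (-(x ^ 2 / 2)) *
      Real.exp (-((bF t * (x - y * Real.exp t)) ^ 2 / 2)))

lemma D_pos {t : ℝ} (ht : 0 < t) : 0 < 1 - Real.exp (-2 * t) := by
  have : Real.exp (-2 * t) < 1 := Real.exp_lt_one_iff.2 (by linarith)
  linarith

lemma heat_conj {t : ℝ} (ht : 0 < t) (y : ℝ) :
    (fun u => Real.exp (u ^ 2 / 2) * hermiteHeat t u y)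
      = fun u => cF t * Real.exp (y ^ 2 / 2) *
          Real.exp (-((bF t * (u - y * Real.exp t)) ^ 2 / 2)) := by
  have hD := D_pos ht
  have hE : (0:ℝ) < Real.exp (-t) := Real.exp_pos _
  have hE2 : Real.exp (-2 * t) = Real.exp (-t) ^ 2 := by
    rw [show (-2:ℝ) * t = (-t) + (-t) by ring, Real.exp_add, sq]
  have hEt : Real.exp t = (Real.exp (-t))⁻¹ := by
    rw [Real.exp_neg, inv_inv]
  have hb2 : bF t ^ 2 = 2 * Real.exp (-2 * t) / (1 - Real.exp (-2 * t)) := by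
    rw [bF, Real.sq_sqrt]; positivity
  funext u
  rw [hermiteHeat, cF,
    mul_comm (Real.exp (u ^ 2 / 2)) _, mul_assoc, ← Real.exp_add,
    mul_assoc ((Real.exp (-t) / (1 - Real.exp (-2 * t))) ^ ((1 : ℝ) / 2) / Real.sqrt Real.pi)
      (Real.exp (y ^ 2 / 2)) _, ← Real.exp_add]
  congr 1
  have expand : (bF t * (u - y * Real.exp t)) ^ 2
      = bF t ^ 2 * (u - y * Real.exp t) ^ 2 := by ring
  rw [expand, hb2, hEt, hE2]
  have hD' : 1 - Real.exp (-t) ^ 2 ≠ 0 := by rw [hE2] at hD; exact ne_of_gt hD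
  field_simp
  ring

lemma heat_smooth (t y : ℝ) : ContDiff ℝ (⊤ : ℕ∞) (fun u => hermiteHeat t u y) := by
  unfold hermiteHeat
  apply ContDiff.mul contDiff_const
  apply ContDiff.exp
  apply ContDiff.add
  · exact ((contDiff_const.mul ((contDiff_id.pow 2).add contDiff_const)).mul contDiff_const).neg
  · exact (((contDiff_const.mul contDiff_id).mul contDiff_const).mul contDiff_const).div_const _

lemma gauss_smooth (b m : ℝ) :
    ContDiff ℝ (⊤ : ℕ∞) (fun u : ℝ => Real.exp (-((b * (u - m)) ^ 2 / 2))) := by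
  apply ContDiff.exp
  exact (((contDiff_const.mul (contDiff_id.sub contDiff_const)).pow 2).div_const 2).neg

lemma dh_heat_eq {t : ℝ} (ht : 0 < t) (y : ℝ) (l : ℕ) :
    Dh^[l] (fun u => hermiteHeat t u y) = fun x => PsiE l t x y := by
  funext x
  rw [dh_iterate (heat_smooth t y) l, heat_conj ht y]
  have h5 : iteratedDeriv l (fun u : ℝ => cF t * Real.exp (y ^ 2 / 2) *
      Real.exp (-((bF t * (u - y * Real.exp t)) ^ 2 / 2))) x
      = (cF t * Real.exp (y ^ 2 / 2)) *
        iteratedDeriv l (fun u : ℝ => Real.exp (-((bF t * (u - y * Real.exp t)) ^ 2 / 2))) x := by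
    have := iterDeriv_cmul (cF t * Real.exp (y ^ 2 / 2)) (gauss_smooth (bF t) (y * Real.exp t)) l x
    simpa using this
  simp only [h5, iter_gauss, PsiE]
  ring

lemma psiE_hasDeriv {t : ℝ} (ht : 0 < t) (y : ℝ) (l : ℕ) (x : ℝ) :
    HasDerivAt (fun x' => PsiE l t x' y)
      (PsiE (l + 1) t x y - x * PsiE l t x y) x := by
  have hψ : ContDiff ℝ (⊤ : ℕ∞) (fun u : ℝ => Real.exp (u ^ 2 / 2) * hermiteHeat t u y) :=
    (((contDiff_id.pow 2).div_const 2).exp).mul (heat_smooth t y)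
  have e1 := dh_heat_eq ht y l
  have e2 := dh_heat_eq ht y (l + 1)
  rw [← e1, ← congrFun e2 x, ← congrFun e1 x]
  rw [dh_iterate (heat_smooth t y) l, dh_iterate (heat_smooth t y) (l + 1)]
  have h1 : HasDerivAt (fun x : ℝ => Real.exp (-(x ^ 2 / 2))) (-x * Real.exp (-(x ^ 2 / 2))) x := by
    have h0 : HasDerivAt (fun x : ℝ => -(x ^ 2 / 2)) (-x) x := by
      simpa using ((hasDerivAt_pow 2 x).div_const 2).fun_neg
    simpa [mul_comm] using h0.exp
  have hd : Differentiable ℝ (iteratedDeriv l (fun u : ℝ => Real.exp (u ^ 2 / 2) * hermiteHeat t u y)) :=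
    hψ.differentiable_iteratedDeriv l (natlt_top l)
  have h2 : HasDerivAt (iteratedDeriv l (fun u : ℝ => Real.exp (u ^ 2 / 2) * hermiteHeat t u y))
      (iteratedDeriv (l + 1) (fun u : ℝ => Real.exp (u ^ 2 / 2) * hermiteHeat t u y) x) x := by
    rw [iteratedDeriv_succ]
    exact (hd x).hasDerivAt
  have := h1.fun_mul h2
  refine this.congr_deriv ?_
  dsimp only
  ring

lemma pow_le_factorial_mul_exp (u : ℝ) (hu : 0 ≤ u) (n : ℕ) :
    u ^ n ≤ (n.factorial : ℝ) * Real.exp u := by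
  have h1 : u ^ n / (n.factorial : ℝ) ≤ ∑ i ∈ Finset.range (n + 1), u ^ i / (i.factorial : ℝ) := by
    refine Finset.single_le_sum (f := fun i => u ^ i / (i.factorial : ℝ)) ?_ ?_
    · intro i _; positivity
    · exact Finset.self_mem_range_succ n
  have h2 := Real.sum_le_exp_of_nonneg hu (n + 1)
  have h3 : u ^ n / (n.factorial : ℝ) ≤ Real.exp u := le_trans h1 h2
  have hf : (0:ℝ) < (n.factorial : ℝ) := by exact_mod_cast n.factorial_pos
  calc u ^ n = (u ^ n / (n.factorial : ℝ)) * (n.factorial : ℝ) := by field_simp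
  _ ≤ Real.exp u * (n.factorial : ℝ) := by gcongr
  _ = (n.factorial : ℝ) * Real.exp u := by ring

lemma poly_growth (q : Polynomial ℝ) : ∃ C : ℝ, 0 < C ∧ ∀ z : ℝ,
    |q.eval z| ≤ C * Real.exp (z ^ 2 / 4) := by
  classical
  set n := q.natDegree
  refine ⟨Real.exp 1 * (∑ i ∈ Finset.range (n + 1), |q.coeff i| * (i.factorial : ℝ)) + 1,
    by positivity, fun z => ?_⟩
  have habs : |z| ≤ 1 + z ^ 2 / 4 := by nlinarith [sq_nonneg (|z| - 2), sq_abs z, abs_nonneg z]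
  have hexpabs : Real.exp |z| ≤ Real.exp 1 * Real.exp (z ^ 2 / 4) := by
    rw [← Real.exp_add]; exact Real.exp_le_exp.2 habs
  have h0 : q.eval z = ∑ i ∈ Finset.range (n + 1), q.coeff i * z ^ i := by
    rw [Polynomial.eval_eq_sum_range]
  rw [h0]
  calc |∑ i ∈ Finset.range (n + 1), q.coeff i * z ^ i|
      ≤ ∑ i ∈ Finset.range (n + 1), |q.coeff i * z ^ i| := Finset.abs_sum_le_sum_abs _ _
    _ ≤ ∑ i ∈ Finset.range (n + 1), |q.coeff i| * ((i.factorial : ℝ) *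
        (Real.exp 1 * Real.exp (z ^ 2 / 4))) := by
        refine Finset.sum_le_sum fun i _ => ?_
        rw [abs_mul]
        refine mul_le_mul_of_nonneg_left ?_ (abs_nonneg _)
        rw [abs_pow]
        calc |z| ^ i ≤ (i.factorial : ℝ) * Real.exp |z| :=
              pow_le_factorial_mul_exp |z| (abs_nonneg z) i
          _ ≤ (i.factorial : ℝ) * (Real.exp 1 * Real.exp (z ^ 2 / 4)) := by
              have : (0:ℝ) ≤ (i.factorial : ℝ) := by positivity
              exact mul_le_mul_of_nonneg_left hexpabs this
    _ = (∑ i ∈ Finset.range (n + 1), |q.coeff i| * (i.factorial : ℝ)) *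
        (Real.exp 1 * Real.exp (z ^ 2 / 4)) := by
        rw [Finset.sum_mul]; congr 1; funext i; ring
    _ ≤ (Real.exp 1 * (∑ i ∈ Finset.range (n + 1), |q.coeff i| * (i.factorial : ℝ)) + 1) *
        Real.exp (z ^ 2 / 4) := by
        have h1 : (0:ℝ) ≤ Real.exp (z ^ 2 / 4) := (Real.exp_pos _).le
        nlinarith [Real.exp_pos (z ^ 2 / 4)]

lemma hermite_growth (l : ℕ) : ∃ C : ℝ, 0 < C ∧ ∀ z : ℝ,
    |(Polynomial.aeval z (Polynomial.hermite l) : ℝ)| ≤ C * Real.exp (z ^ 2 / 4) := by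
  obtain ⟨C, hC, h⟩ := poly_growth ((Polynomial.hermite l).map (algebraMap ℤ ℝ))
  refine ⟨C, hC, fun z => ?_⟩
  have : (Polynomial.aeval z (Polynomial.hermite l) : ℝ)
      = ((Polynomial.hermite l).map (algebraMap ℤ ℝ)).eval z := by
    rw [Polynomial.eval_map, Polynomial.aeval_def]
  rw [this]; exact h z

set_option maxHeartbeats 8000000 in
lemma psiE_bound (l : ℕ) {δ R : ℝ} (hδ : 0 < δ) (hR : 0 < R) :
    ∃ M : ℝ, 0 < M ∧ ∀ t x y : ℝ, 0 < t → δ ≤ |x - y| → |x| ≤ R → |y| ≤ R →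
      |PsiE l t x y| ≤ M * Real.exp (-(t / 4)) := by
  obtain ⟨C, hC, hH⟩ := hermite_growth l
  obtain ⟨T, hTeq⟩ : ∃ T : ℝ, T = min 1 (Real.log (1 + δ / (2 * R))) := ⟨_, rfl⟩
  have hT : 0 < T := by
    rw [hTeq]
    apply lt_min one_pos
    apply Real.log_pos
    have : 0 < δ / (2 * R) := by positivity
    linarith
  obtain ⟨DT, hDTeq⟩ : ∃ DT : ℝ, DT = 1 - Real.exp (-2 * T) := ⟨_, rfl⟩
  have hDT : 0 < DT := by rw [hDTeq]; exact D_pos hT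
  set n : ℕ := l + 1 with hndef
  obtain ⟨a, haeq⟩ : ∃ a : ℝ, a = Real.exp (-2) * δ ^ 2 / 4 := ⟨_, rfl⟩
  have ha : 0 < a := by rw [haeq]; positivity
  obtain ⟨M₁, hM₁eq⟩ : ∃ M₁ : ℝ,
      M₁ = (1 / DT) ^ ((1 : ℝ) / 2) * Real.sqrt (2 / DT) ^ l * (C * Real.exp (R ^ 2 / 2)) :=
    ⟨_, rfl⟩
  have hM₁ : 0 < M₁ := by
    rw [hM₁eq]
    apply mul_pos (mul_pos _ _) (by positivity)
    · exact Real.rpow_pos_of_pos (by positivity) _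
    · exact pow_pos (Real.sqrt_pos.2 (by positivity)) _
  obtain ⟨M₂, hM₂eq⟩ : ∃ M₂ : ℝ, M₂ = C * Real.exp (R ^ 2 / 2) *
      Real.sqrt ((n.factorial : ℝ) * (2 * Real.exp 2 / a) ^ n) * Real.exp (1 / 4) := ⟨_, rfl⟩
  refine ⟨max M₁ M₂, lt_of_lt_of_le hM₁ (le_max_left _ _), fun t x y ht hxy hxR hyR => ?_⟩
  have hD := D_pos ht
  have hE : (0:ℝ) < Real.exp (-t) := Real.exp_pos _
  have hcF : 0 ≤ cF t := by rw [cF]; positivity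
  have hbF : 0 ≤ bF t := Real.sqrt_nonneg _
  set s : ℝ := bF t * (x - y * Real.exp t) with hsdef
  have hb2 : bF t ^ 2 = 2 * Real.exp (-2 * t) / (1 - Real.exp (-2 * t)) := by
    rw [bF, Real.sq_sqrt]; positivity
  have habs : |PsiE l t x y| = cF t * (bF t ^ l *
      |(Polynomial.aeval s (Polynomial.hermite l) : ℝ)|) *
      (Real.exp (y ^ 2 / 2) * Real.exp (-(x ^ 2 / 2)) * Real.exp (-(s ^ 2 / 2))) := by
    rw [PsiE, abs_mul, abs_mul, abs_of_nonneg hcF,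
      abs_of_pos (show (0:ℝ) < Real.exp (y ^ 2 / 2) * Real.exp (-(x ^ 2 / 2)) *
        Real.exp (-((bF t * (x - y * Real.exp t)) ^ 2 / 2)) by positivity)]
    congr 2
    rw [abs_mul, abs_mul, abs_pow, abs_neg, abs_one, one_pow, one_mul, abs_pow,
      abs_of_nonneg hbF]
  have hmain : |PsiE l t x y| ≤ cF t * bF t ^ l * (C * Real.exp (R ^ 2 / 2)) *
      Real.exp (-(s ^ 2 / 4)) := by
    rw [habs]
    have hy2 : y ^ 2 ≤ R ^ 2 := by
      rw [← sq_abs y]; gcongr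
    calc cF t * (bF t ^ l * |(Polynomial.aeval s (Polynomial.hermite l) : ℝ)|) *
          (Real.exp (y ^ 2 / 2) * Real.exp (-(x ^ 2 / 2)) * Real.exp (-(s ^ 2 / 2)))
        ≤ cF t * (bF t ^ l * (C * Real.exp (s ^ 2 / 4))) *
          (Real.exp (R ^ 2 / 2) * 1 * Real.exp (-(s ^ 2 / 2))) := by
          gcongr
          all_goals first
            | exact hH s
            | exact Real.exp_le_one_iff.2 (neg_nonpos.2 (by positivity))
            | linarith
      _ = cF t * bF t ^ l * (C * Real.exp (R ^ 2 / 2)) *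
          (Real.exp (s ^ 2 / 4) * Real.exp (-(s ^ 2 / 2))) := by ring
      _ = cF t * bF t ^ l * (C * Real.exp (R ^ 2 / 2)) * Real.exp (-(s ^ 2 / 4)) := by
          rw [← Real.exp_add]; congr 2; ring
  rcases le_or_gt T t with hcase | hcase
  · -- large time
    have hDTle : DT ≤ 1 - Real.exp (-2 * t) := by
      have : Real.exp (-2 * t) ≤ Real.exp (-2 * T) := Real.exp_le_exp.2 (by nlinarith)
      rw [hDTeq]; linarith
    have hc1 : cF t ≤ Real.exp (-(t / 2)) * (1 / DT) ^ ((1 : ℝ) / 2) := by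
      have step1 : cF t ≤ (Real.exp (-t) / (1 - Real.exp (-2 * t))) ^ ((1 : ℝ) / 2) := by
        rw [cF]
        apply div_le_self (Real.rpow_nonneg (by positivity) _)
        rw [show (1:ℝ) = Real.sqrt 1 by simp]
        exact Real.sqrt_le_sqrt (by linarith [Real.pi_gt_three])
      have step2 : (Real.exp (-t) / (1 - Real.exp (-2 * t))) ^ ((1 : ℝ) / 2)
          ≤ (Real.exp (-t) * (1 / DT)) ^ ((1 : ℝ) / 2) := by
        apply Real.rpow_le_rpow (by positivity) _ (by norm_num)
        rw [mul_one_div, div_le_div_iff₀ hD hDT]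
        nlinarith
      have step3 : (Real.exp (-t) * (1 / DT)) ^ ((1 : ℝ) / 2)
          = Real.exp (-(t / 2)) * (1 / DT) ^ ((1 : ℝ) / 2) := by
        rw [Real.mul_rpow hE.le (by positivity), ← Real.exp_mul,
          show (-t) * ((1:ℝ) / 2) = -(t / 2) by ring]
      linarith
    have hb1 : bF t ≤ Real.sqrt (2 / DT) := by
      apply Real.sqrt_le_sqrt
      calc 2 * Real.exp (-2 * t) / (1 - Real.exp (-2 * t)) ≤ 2 * 1 / DT := by
            gcongr
            exact Real.exp_le_one_iff.2 (by nlinarith)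
        _ = 2 / DT := by ring
    have hblp : bF t ^ l ≤ Real.sqrt (2 / DT) ^ l := pow_le_pow_left₀ hbF hb1 l
    calc |PsiE l t x y| ≤ cF t * bF t ^ l * (C * Real.exp (R ^ 2 / 2)) *
          Real.exp (-(s ^ 2 / 4)) := hmain
      _ ≤ (Real.exp (-(t / 2)) * (1 / DT) ^ ((1 : ℝ) / 2)) * Real.sqrt (2 / DT) ^ l *
          (C * Real.exp (R ^ 2 / 2)) * 1 := by
          have he1 : Real.exp (-(s ^ 2 / 4)) ≤ 1 :=
            Real.exp_le_one_iff.2 (neg_nonpos.2 (by positivity))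
          apply mul_le_mul (mul_le_mul (mul_le_mul hc1 hblp (by positivity) (by positivity))
            le_rfl (by positivity) (by positivity)) he1 (by positivity) (by positivity)
      _ = M₁ * Real.exp (-(t / 2)) := by rw [hM₁eq]; ring
      _ ≤ M₁ * Real.exp (-(t / 4)) := by
          apply mul_le_mul_of_nonneg_left (Real.exp_le_exp.2 (by linarith)) hM₁.le
      _ ≤ max M₁ M₂ * Real.exp (-(t / 4)) := by
          apply mul_le_mul_of_nonneg_right (le_max_left _ _) (Real.exp_pos _).le
  · -- small time
    have ht1 : t ≤ 1 := le_trans hcase.le (by rw [hTeq] at *; exact min_le_left _ _)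
    have htlog : t ≤ Real.log (1 + δ / (2 * R)) :=
      le_trans hcase.le (by rw [hTeq] at *; exact min_le_right _ _)
    have hE2t_ge : Real.exp (-2) ≤ Real.exp (-2 * t) := Real.exp_le_exp.2 (by nlinarith)
    have hE2t_le : Real.exp (-2 * t) ≤ 1 := Real.exp_le_one_iff.2 (by nlinarith)
    have hDle : 1 - Real.exp (-2 * t) ≤ 2 * t := by
      have := Real.add_one_le_exp (-2 * t)
      linarith
    have hexpt : Real.exp t ≤ 1 + δ / (2 * R) := by
      calc Real.exp t ≤ Real.exp (Real.log (1 + δ / (2 * R))) := Real.exp_le_exp.2 htlog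
        _ = 1 + δ / (2 * R) := Real.exp_log (by positivity)
    have hexpt1 : 1 ≤ Real.exp t := Real.one_le_exp ht.le
    have hs_ge : δ / 2 ≤ |x - y * Real.exp t| := by
      have h1 : |y * Real.exp t - y| ≤ δ / 2 := by
        have e : y * Real.exp t - y = y * (Real.exp t - 1) := by ring
        rw [e, abs_mul, abs_of_nonneg (by linarith : (0:ℝ) ≤ Real.exp t - 1)]
        calc |y| * (Real.exp t - 1) ≤ R * (δ / (2 * R)) := by
              apply mul_le_mul hyR (by linarith) (by linarith) hR.le
          _ = δ / 2 := by field_simp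
      have htri : |x - y| ≤ |x - y * Real.exp t| + |y * Real.exp t - y| := by
        have e : x - y = (x - y * Real.exp t) + (y * Real.exp t - y) := by ring
        rw [e]; exact abs_add_le _ _
      linarith
    have hxm2 : δ ^ 2 / 4 ≤ (x - y * Real.exp t) ^ 2 := by
      have h2 := sq_abs (x - y * Real.exp t)
      nlinarith [abs_nonneg (x - y * Real.exp t)]
    have hb2ge : Real.exp (-2) / t ≤ bF t ^ 2 := by
      rw [hb2, div_le_div_iff₀ ht hD]
      have q1 : Real.exp (-2) * (1 - Real.exp (-2 * t)) ≤ Real.exp (-2) * (2 * t) :=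
        mul_le_mul_of_nonneg_left hDle (Real.exp_pos _).le
      have q2 : Real.exp (-2) * (2 * t) ≤ Real.exp (-2 * t) * (2 * t) :=
        mul_le_mul_of_nonneg_right hE2t_ge (by linarith)
      nlinarith
    have hb2le : bF t ^ 2 ≤ Real.exp 2 / t := by
      rw [hb2, div_le_div_iff₀ hD ht]
      have q0 : Real.exp (-2) * Real.exp 2 = 1 := by rw [← Real.exp_add]; norm_num
      have hDge : 2 * t * Real.exp (-2) ≤ 1 - Real.exp (-2 * t) := by
        have k1 := Real.add_one_le_exp (2 * t)
        have k2 : Real.exp (-2 * t) * Real.exp (2 * t) = 1 := by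
          rw [← Real.exp_add]; norm_num
        have k3 : 2 * t * Real.exp (-2 * t) ≤ 1 - Real.exp (-2 * t) := by nlinarith
        have k4 : 2 * t * Real.exp (-2) ≤ 2 * t * Real.exp (-2 * t) :=
          mul_le_mul_of_nonneg_left hE2t_ge (by linarith)
        linarith
      have w1 : Real.exp 2 * (2 * t * Real.exp (-2)) ≤ Real.exp 2 * (1 - Real.exp (-2 * t)) :=
        mul_le_mul_of_nonneg_left hDge (Real.exp_pos 2).le
      have w2 : Real.exp 2 * (2 * t * Real.exp (-2)) = 2 * t := by
        have e0 : Real.exp 2 * Real.exp (-2) = 1 := by rw [← Real.exp_add]; norm_num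
        linear_combination (2 * t) * e0
      have w3 : 2 * Real.exp (-2 * t) * t ≤ 2 * t := by nlinarith [ht.le, hE2t_le]
      linarith
    have hEDle : Real.exp (-t) / (1 - Real.exp (-2 * t)) ≤ Real.exp 2 / t := by
      rw [div_le_div_iff₀ hD ht]
      have q1 : Real.exp (-t) ≤ 1 := Real.exp_le_one_iff.2 (by linarith)
      have hDge : 2 * t * Real.exp (-2) ≤ 1 - Real.exp (-2 * t) := by
        have k1 := Real.add_one_le_exp (2 * t)
        have k2 : Real.exp (-2 * t) * Real.exp (2 * t) = 1 := by
          rw [← Real.exp_add]; norm_num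
        have k3 : 2 * t * Real.exp (-2 * t) ≤ 1 - Real.exp (-2 * t) := by nlinarith
        have k4 : 2 * t * Real.exp (-2) ≤ 2 * t * Real.exp (-2 * t) :=
          mul_le_mul_of_nonneg_left hE2t_ge (by linarith)
        linarith
      have w1 : Real.exp 2 * (2 * t * Real.exp (-2)) ≤ Real.exp 2 * (1 - Real.exp (-2 * t)) :=
        mul_le_mul_of_nonneg_left hDge (Real.exp_pos 2).le
      have w2 : Real.exp 2 * (2 * t * Real.exp (-2)) = 2 * t := by
        have e0 : Real.exp 2 * Real.exp (-2) = 1 := by rw [← Real.exp_add]; norm_num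
        linear_combination (2 * t) * e0
      have w3 : Real.exp (-t) * t ≤ t := by nlinarith [ht.le, q1]
      linarith
    have hs2ge : a / t ≤ s ^ 2 := by
      have e : s ^ 2 = bF t ^ 2 * (x - y * Real.exp t) ^ 2 := by rw [hsdef]; ring
      rw [e]
      calc a / t = (Real.exp (-2) / t) * (δ ^ 2 / 4) := by rw [haeq]; ring
        _ ≤ bF t ^ 2 * (x - y * Real.exp t) ^ 2 :=
            mul_le_mul hb2ge hxm2 (by positivity) (sq_nonneg _)
    obtain ⟨P, hPeq⟩ : ∃ P : ℝ, P = Real.sqrt (Real.exp (-t) / (1 - Real.exp (-2 * t))) *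
        bF t ^ l * Real.exp (-(a / (4 * t))) := ⟨_, rfl⟩
    have hP0 : 0 ≤ P := by rw [hPeq]; positivity
    have hXP : cF t * bF t ^ l * Real.exp (-(s ^ 2 / 4)) ≤ P := by
      rw [hPeq]
      have e1 : cF t ≤ Real.sqrt (Real.exp (-t) / (1 - Real.exp (-2 * t))) := by
        rw [cF, Real.sqrt_eq_rpow (Real.exp (-t) / (1 - Real.exp (-2 * t)))]
        apply div_le_self (Real.rpow_nonneg (by positivity) _)
        rw [show (1:ℝ) = Real.sqrt 1 by simp]
        exact Real.sqrt_le_sqrt (by linarith [Real.pi_gt_three])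
      have e2 : Real.exp (-(s ^ 2 / 4)) ≤ Real.exp (-(a / (4 * t))) := by
        apply Real.exp_le_exp.2
        have : a / (4 * t) ≤ s ^ 2 / 4 := by
          calc a / (4 * t) = (a / t) / 4 := by ring
            _ ≤ s ^ 2 / 4 := by linarith
        linarith
      apply mul_le_mul (mul_le_mul e1 le_rfl (by positivity)
        (Real.sqrt_nonneg _)) e2 (Real.exp_pos _).le
      positivity
    have hPsq : P ^ 2 ≤ (n.factorial : ℝ) * (2 * Real.exp 2 / a) ^ n := by
      have e1 : P ^ 2 = (Real.exp (-t) / (1 - Real.exp (-2 * t))) * (bF t ^ 2) ^ l *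
          Real.exp (-(a / (2 * t))) := by
        have q1 : (Real.sqrt (Real.exp (-t) / (1 - Real.exp (-2 * t)))) ^ 2
            = Real.exp (-t) / (1 - Real.exp (-2 * t)) := Real.sq_sqrt (by positivity)
        have q2 : (bF t ^ l) ^ 2 = (bF t ^ 2) ^ l := by
          rw [← pow_mul, ← pow_mul, mul_comm]
        have q3 : Real.exp (-(a / (4 * t))) * Real.exp (-(a / (4 * t)))
            = Real.exp (-(a / (2 * t))) := by
          rw [← Real.exp_add]; congr 1; ring
        calc P ^ 2 = (Real.sqrt (Real.exp (-t) / (1 - Real.exp (-2 * t)))) ^ 2 *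
              (bF t ^ l) ^ 2 * (Real.exp (-(a / (4 * t))) * Real.exp (-(a / (4 * t)))) := by
              rw [hPeq]; ring
          _ = (Real.exp (-t) / (1 - Real.exp (-2 * t))) * (bF t ^ 2) ^ l *
              Real.exp (-(a / (2 * t))) := by rw [q1, q2, q3]
      rw [e1]
      have hpl := pow_le_pow_left₀ (sq_nonneg (bF t)) hb2le l
      have step1 : (Real.exp (-t) / (1 - Real.exp (-2 * t))) * (bF t ^ 2) ^ l *
          Real.exp (-(a / (2 * t))) ≤ (Real.exp 2 / t) ^ n * Real.exp (-(a / (2 * t))) := by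
        have e : (Real.exp 2 / t) ^ n = (Real.exp 2 / t) * (Real.exp 2 / t) ^ l := by
          rw [hndef, pow_succ]; ring
        rw [e]
        exact mul_le_mul (mul_le_mul hEDle hpl (by positivity) (by positivity)) le_rfl
          (Real.exp_pos _).le (by positivity)
      have hu : 0 < a / (2 * t) := by positivity
      have hfac := pow_le_factorial_mul_exp (a / (2 * t)) hu.le n
      have hinv : Real.exp (-(a / (2 * t))) ≤ (n.factorial : ℝ) / (a / (2 * t)) ^ n := by
        rw [le_div_iff₀ (by positivity), Real.exp_neg, inv_mul_le_iff₀ (Real.exp_pos _)]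
        calc (a / (2 * t)) ^ n ≤ (n.factorial : ℝ) * Real.exp (a / (2 * t)) := hfac
          _ = Real.exp (a / (2 * t)) * (n.factorial : ℝ) := by ring
      have step2 : (Real.exp 2 / t) ^ n * Real.exp (-(a / (2 * t)))
          ≤ (Real.exp 2 / t) ^ n * ((n.factorial : ℝ) / (a / (2 * t)) ^ n) :=
        mul_le_mul_of_nonneg_left hinv (by positivity)
      have step3 : (Real.exp 2 / t) ^ n * ((n.factorial : ℝ) / (a / (2 * t)) ^ n)
          = (n.factorial : ℝ) * (2 * Real.exp 2 / a) ^ n := by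
        rw [div_pow, div_pow, div_pow]
        field_simp
        ring
      calc (Real.exp (-t) / (1 - Real.exp (-2 * t))) * (bF t ^ 2) ^ l *
            Real.exp (-(a / (2 * t)))
          ≤ (Real.exp 2 / t) ^ n * Real.exp (-(a / (2 * t))) := step1
        _ ≤ (Real.exp 2 / t) ^ n * ((n.factorial : ℝ) / (a / (2 * t)) ^ n) := step2
        _ = (n.factorial : ℝ) * (2 * Real.exp 2 / a) ^ n := step3
    have hPle : P ≤ Real.sqrt ((n.factorial : ℝ) * (2 * Real.exp 2 / a) ^ n) := by
      calc P = Real.sqrt (P ^ 2) := (Real.sqrt_sq hP0).symm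
        _ ≤ Real.sqrt ((n.factorial : ℝ) * (2 * Real.exp 2 / a) ^ n) :=
            Real.sqrt_le_sqrt hPsq
    calc |PsiE l t x y| ≤ cF t * bF t ^ l * (C * Real.exp (R ^ 2 / 2)) *
          Real.exp (-(s ^ 2 / 4)) := hmain
      _ = (C * Real.exp (R ^ 2 / 2)) * (cF t * bF t ^ l * Real.exp (-(s ^ 2 / 4))) := by ring
      _ ≤ (C * Real.exp (R ^ 2 / 2)) *
          Real.sqrt ((n.factorial : ℝ) * (2 * Real.exp 2 / a) ^ n) :=
          mul_le_mul_of_nonneg_left (le_trans hXP hPle) (by positivity)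
      _ = M₂ * Real.exp (-(1 / 4 : ℝ)) := by
          rw [hM₂eq, mul_assoc (C * Real.exp (R ^ 2 / 2) *
            Real.sqrt ((n.factorial : ℝ) * (2 * Real.exp 2 / a) ^ n)), ← Real.exp_add]
          norm_num
      _ ≤ M₂ * Real.exp (-(t / 4)) := by
          apply mul_le_mul_of_nonneg_left (Real.exp_le_exp.2 (by linarith)) ?_
          rw [hM₂eq]; positivity
      _ ≤ max M₁ M₂ * Real.exp (-(t / 4)) :=
          mul_le_mul_of_nonneg_right (le_max_right _ _) (Real.exp_pos _).le

lemma psiE_contOn (l : ℕ) (k' : ℝ) (x : ℝ) :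
    ContinuousOn (fun p : ℝ × ℝ => p.2 ^ k' * PsiE l p.2 x p.1)
      ((univ : Set ℝ) ×ˢ Ioi (0 : ℝ)) := by
  have hDne : ∀ p : ℝ × ℝ, p ∈ (univ : Set ℝ) ×ˢ Ioi (0 : ℝ) →
      1 - Real.exp (-2 * p.2) ≠ 0 := fun p hp => ne_of_gt (D_pos hp.2)
  have hDcont : ContinuousOn (fun p : ℝ × ℝ => 1 - Real.exp (-2 * p.2))
      ((univ : Set ℝ) ×ˢ Ioi (0 : ℝ)) := by fun_prop
  have hc : ContinuousOn (fun p : ℝ × ℝ => cF p.2) ((univ : Set ℝ) ×ˢ Ioi (0 : ℝ)) := by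
    unfold cF
    apply ContinuousOn.div_const
    apply ContinuousOn.rpow_const
    · exact ContinuousOn.div (by fun_prop) hDcont hDne
    · exact fun p _ => Or.inr (by norm_num)
  have hb : ContinuousOn (fun p : ℝ × ℝ => bF p.2) ((univ : Set ℝ) ×ˢ Ioi (0 : ℝ)) := by
    unfold bF
    apply Real.continuous_sqrt.comp_continuousOn
    exact ContinuousOn.div (by fun_prop) hDcont hDne
  have harg : ContinuousOn (fun p : ℝ × ℝ => bF p.2 * (x - p.1 * Real.exp p.2))
      ((univ : Set ℝ) ×ˢ Ioi (0 : ℝ)) := hb.mul (by fun_prop)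
  have haev : ContinuousOn (fun p : ℝ × ℝ =>
      (Polynomial.aeval (bF p.2 * (x - p.1 * Real.exp p.2)) (Polynomial.hermite l) : ℝ))
      ((univ : Set ℝ) ×ˢ Ioi (0 : ℝ)) :=
    (Polynomial.continuous_aeval (Polynomial.hermite l)).comp_continuousOn harg
  have hrpow : ContinuousOn (fun p : ℝ × ℝ => p.2 ^ k')
      ((univ : Set ℝ) ×ˢ Ioi (0 : ℝ)) := by
    apply ContinuousOn.rpow_const (by fun_prop)
    exact fun p hp => Or.inl (ne_of_gt hp.2)
  unfold PsiE
  exact hrpow.mul ((hc.mul ((continuousOn_const.mul (hb.pow l)).mul haev)).mul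
    (((by fun_prop : ContinuousOn (fun p : ℝ × ℝ => Real.exp (p.1 ^ 2 / 2) *
      Real.exp (-(x ^ 2 / 2))) ((univ : Set ℝ) ×ˢ Ioi (0 : ℝ)))).mul
      (Real.continuous_exp.comp_continuousOn (by
        exact (((harg.pow 2).div_const 2).neg)))))

lemma psiE_contOn_t (l : ℕ) (k' : ℝ) (x y : ℝ) :
    ContinuousOn (fun t : ℝ => t ^ k' * PsiE l t x y) (Ioi (0 : ℝ)) := by
  have h := (psiE_contOn l k' x).comp
    (Continuous.continuousOn (by fun_prop) : ContinuousOn (fun t : ℝ => ((y, t) : ℝ × ℝ)) (Ioi 0))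
    (fun t ht => ⟨trivial, ht⟩)
  exact h

lemma int_exp_rpow {c r : ℝ} (hc : -1 < c) (hr : 0 < r) :
    IntegrableOn (fun t : ℝ => t ^ c * Real.exp (-(r * t))) (Ioi (0 : ℝ)) := by
  have h0 : IntegrableOn (fun x : ℝ => Real.exp (-x) * x ^ (c + 1 - 1)) (Ioi 0) :=
    Real.GammaIntegral_convergent (by linarith)
  have h1 : IntegrableOn (fun x : ℝ => Real.exp (-(r * x)) * (r * x) ^ (c + 1 - 1)) (Ioi 0) := by
    have h2 := (integrableOn_Ioi_comp_mul_left_iff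
      (fun x : ℝ => Real.exp (-x) * x ^ (c + 1 - 1)) 0 hr).2
    rw [mul_zero] at h2
    exact h2 h0
  have h3 : IntegrableOn (fun x : ℝ => r ^ (-c) *
      (Real.exp (-(r * x)) * (r * x) ^ (c + 1 - 1))) (Ioi 0) := h1.const_mul _
  apply h3.congr_fun _ measurableSet_Ioi
  intro t ht
  have ht0 : (0:ℝ) < t := ht
  show r ^ (-c) * (Real.exp (-(r * t)) * (r * t) ^ (c + 1 - 1)) = t ^ c * Real.exp (-(r * t))
  rw [show c + 1 - 1 = c by ring, Real.mul_rpow hr.le ht0.le, Real.rpow_neg hr.le]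
  have hrc : r ^ c ≠ 0 := ne_of_gt (Real.rpow_pos_of_pos hr _)
  field_simp

lemma psiE_meas_t (l : ℕ) (k' : ℝ) (x y : ℝ) :
    AEStronglyMeasurable (fun t : ℝ => t ^ k' * PsiE l t x y)
      (volume.restrict (Ioi (0 : ℝ))) :=
  (psiE_contOn_t l k' x y).aestronglyMeasurable measurableSet_Ioi

lemma psiE_meas_y (l : ℕ) (k' : ℝ) (x : ℝ) :
    AEStronglyMeasurable (fun y : ℝ => ∫ t in Ioi (0 : ℝ), t ^ k' * PsiE l t x y) volume := by
  have hprod : (volume : Measure ℝ).prod (volume.restrict (Ioi (0:ℝ)))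
      = ((volume : Measure ℝ).prod (volume : Measure ℝ)).restrict
        ((univ : Set ℝ) ×ˢ Ioi (0:ℝ)) := by
    rw [← Measure.prod_restrict, Measure.restrict_univ]
  have h : AEStronglyMeasurable (fun p : ℝ × ℝ => p.2 ^ k' * PsiE l p.2 x p.1)
      ((volume : Measure ℝ).prod (volume.restrict (Ioi (0:ℝ)))) := by
    rw [hprod]
    exact (psiE_contOn l k' x).aestronglyMeasurable
      (MeasurableSet.prod MeasurableSet.univ measurableSet_Ioi)
  exact h.integral_prod_right'

end

/-- for `x` outside the support of `φ`, `((d/dx)+x)^k H^{-k/2}φ(x)` is given by an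
absolutely convergent integral against the kernel `R^{(k,k)}`. -/
theorem hermite_negative_power_deriv_top (k : ℕ) (hk : 1 ≤ k) (φ : ℝ → ℝ)
    (hφ : ContDiff ℝ (⊤ : ℕ∞) φ) (hφc : HasCompactSupport φ)
    (x : ℝ) (hx : x ∉ tsupport φ) :
    Integrable (fun y => rieszKernelHl k k x y * φ y) ∧
    Dh^[k] (Hinv k φ) x = ∫ y, rieszKernelHl k k x y * φ y := by
  classical
  by_cases hK0 : ∀ y, φ y = 0
  · -- trivial case: φ ≡ 0
    have hzero : (fun y => rieszKernelHl k k x y * φ y) = fun _ => 0 := by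
      funext y; rw [hK0 y, mul_zero]
    have hH0 : Hinv k φ = fun _ => 0 := by
      funext z; rw [Hinv]; simp [hK0]
    have hDh0 : Dh^[k] (fun _ : ℝ => (0:ℝ)) = fun _ => 0 := by
      apply Function.iterate_fixed
      funext z; simp [Dh]
    refine ⟨by rw [hzero]; exact integrable_zero _ _ _, ?_⟩
    rw [hH0, hDh0, hzero]
    simp
  · -- main case
    push_neg at hK0
    obtain ⟨y₀, hy₀⟩ := hK0
    have hKne : (tsupport φ).Nonempty := ⟨y₀, subset_tsupport φ hy₀⟩
    have hKcl : IsClosed (tsupport φ) := isClosed_tsupport φ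
    have hδ0 : 0 < Metric.infDist x (tsupport φ) :=
      (hKcl.notMem_iff_infDist_pos hKne).1 hx
    obtain ⟨δ0, hδ0eq⟩ : ∃ δ0 : ℝ, δ0 = Metric.infDist x (tsupport φ) := ⟨_, rfl⟩
    rw [← hδ0eq] at hδ0
    obtain ⟨R₀, hR₀⟩ := hφc.isBounded.subset_closedBall 0
    obtain ⟨R, hReq⟩ : ∃ R : ℝ, R = max R₀ 0 + |x| + δ0 + 1 := ⟨_, rfl⟩
    have hR : 0 < R := by
      rw [hReq]
      have := le_max_right R₀ (0:ℝ)
      have := abs_nonneg x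
      linarith
    have hδ : 0 < δ0 / 2 := by linarith
    have hyR : ∀ y' ∈ tsupport φ, |y'| ≤ R := by
      intro y' hy'
      have := hR₀ hy'
      rw [Metric.mem_closedBall, Real.dist_eq, sub_zero] at this
      rw [hReq]
      have := le_max_left R₀ (0:ℝ)
      have := abs_nonneg x
      linarith
    have hxR : ∀ z ∈ Metric.closedBall x (δ0 / 4), |z| ≤ R := by
      intro z hz
      rw [Metric.mem_closedBall] at hz
      have h1 : |z| ≤ |z - x| + |x| := by
        have := abs_add_le (z - x) x; simpa using this
      rw [← Real.dist_eq] at h1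
      rw [hReq]
      have := le_max_right R₀ (0:ℝ)
      linarith
    have hdist : ∀ z ∈ Metric.closedBall x (δ0 / 4), ∀ y' ∈ tsupport φ,
        δ0 / 2 ≤ |z - y'| := by
      intro z hz y' hy'
      rw [Metric.mem_closedBall] at hz
      have h1 : δ0 ≤ dist x y' := by
        rw [hδ0eq]; exact Metric.infDist_le_dist_of_mem hy'
      have h2 : dist x y' ≤ dist x z + dist z y' := dist_triangle _ _ _
      have h3 : dist x z = dist z x := dist_comm _ _
      rw [← Real.dist_eq]
      linarith
    have hk1 : (1:ℝ) ≤ (k:ℝ) := by exact_mod_cast hk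
    have ha_exp : (-1:ℝ) < (k:ℝ) / 2 - 1 := by linarith
    have hMex : ∀ l : ℕ, ∃ M : ℝ, 0 < M ∧ ∀ t z y' : ℝ, 0 < t → δ0 / 2 ≤ |z - y'| →
        |z| ≤ R → |y'| ≤ R → |PsiE l t z y'| ≤ M * Real.exp (-(t / 4)) :=
      fun l => psiE_bound l hδ hR
    choose M hMpos hMb using hMex
    -- integrability in t
    have hInt : ∀ (l : ℕ) (z y' : ℝ), z ∈ Metric.closedBall x (δ0 / 4) → y' ∈ tsupport φ →
        IntegrableOn (fun t => t ^ ((k:ℝ) / 2 - 1) * PsiE l t z y') (Ioi (0:ℝ)) := by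
      intro l z y' hz hy'
      apply Integrable.mono'
        ((int_exp_rpow ha_exp (by norm_num : (0:ℝ) < 1/4)).const_mul (M l))
      · exact psiE_meas_t l _ z y'
      · filter_upwards [self_mem_ae_restrict measurableSet_Ioi] with t ht
        have ht0 : (0:ℝ) < t := ht
        have hb := hMb l t z y' ht0 (hdist z hz y' hy') (hxR z hz) (hyR y' hy')
        calc ‖t ^ ((k:ℝ) / 2 - 1) * PsiE l t z y'‖
            = t ^ ((k:ℝ) / 2 - 1) * |PsiE l t z y'| := by
              rw [norm_mul, Real.norm_eq_abs, Real.norm_eq_abs,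
                abs_of_nonneg (Real.rpow_nonneg ht0.le _)]
          _ ≤ t ^ ((k:ℝ) / 2 - 1) * (M l * Real.exp (-(t / 4))) :=
              mul_le_mul_of_nonneg_left hb (Real.rpow_nonneg ht0.le _)
          _ = M l * (t ^ ((k:ℝ) / 2 - 1) * Real.exp (-(1/4 * t))) := by
              rw [show -(t / 4) = -(1/4 * t) by ring]; ring
    -- kernel in explicit form
    have hker : ∀ (l : ℕ) (z y' : ℝ), rieszKernelHl k l z y'
        = (1 / Real.Gamma ((k:ℝ) / 2)) *
          ∫ t in Ioi (0:ℝ), t ^ ((k:ℝ) / 2 - 1) * PsiE l t z y' := by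
      intro l z y'
      rw [rieszKernelHl]
      congr 1
      apply setIntegral_congr_fun measurableSet_Ioi
      intro t ht
      have ht0 : (0:ℝ) < t := ht
      show t ^ ((k:ℝ) / 2 - 1) * (Dh^[l] (fun u => hermiteHeat t u y')) z
          = t ^ ((k:ℝ) / 2 - 1) * PsiE l t z y'
      rw [dh_heat_eq ht0 y' l]
    -- derivative of the kernel in the first variable
    have hkerDeriv : ∀ (l : ℕ), ∀ z' ∈ Metric.ball x (δ0 / 4), ∀ y' ∈ tsupport φ,
        HasDerivAt (fun z => rieszKernelHl k l z y')
          (rieszKernelHl k (l+1) z' y' - z' * rieszKernelHl k l z' y') z' := by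
      intro l z' hz' y' hy'
      have hz'c : z' ∈ Metric.closedBall x (δ0 / 4) := Metric.ball_subset_closedBall hz'
      have hε : 0 < δ0 / 4 - dist z' x := by
        rw [Metric.mem_ball] at hz'; linarith
      have hsub : ∀ z ∈ Metric.ball z' (δ0 / 4 - dist z' x),
          z ∈ Metric.closedBall x (δ0 / 4) := by
        intro z hz
        rw [Metric.mem_ball] at hz
        rw [Metric.mem_closedBall]
        have := dist_triangle z z' x
        linarith
      have key := hasDerivAt_integral_of_dominated_loc_of_deriv_le
        (F := fun z t => t ^ ((k:ℝ) / 2 - 1) * PsiE l t z y')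
        (F' := fun z t => t ^ ((k:ℝ) / 2 - 1) * (PsiE (l+1) t z y' - z * PsiE l t z y'))
        (x₀ := z')
        (bound := fun t => (M (l+1) + (|x| + δ0 / 4) * M l) *
          (t ^ ((k:ℝ) / 2 - 1) * Real.exp (-(1/4 * t))))
        (μ := volume.restrict (Ioi 0)) (Metric.ball_mem_nhds z' hε)
        (Eventually.of_forall fun z => psiE_meas_t l _ z y')
        (hInt l z' y' hz'c hy')
        (by
          show AEStronglyMeasurable (fun t => t ^ ((k:ℝ) / 2 - 1) *
            (PsiE (l+1) t z' y' - z' * PsiE l t z' y')) (volume.restrict (Ioi 0))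
          have e : (fun t => t ^ ((k:ℝ) / 2 - 1) *
              (PsiE (l+1) t z' y' - z' * PsiE l t z' y'))
              = fun t => (t ^ ((k:ℝ) / 2 - 1) * PsiE (l+1) t z' y') -
                z' * (t ^ ((k:ℝ) / 2 - 1) * PsiE l t z' y') := by
            funext t; ring
          rw [e]
          exact (psiE_meas_t (l+1) _ z' y').sub ((psiE_meas_t l _ z' y').const_mul z'))
        (by
          filter_upwards [self_mem_ae_restrict measurableSet_Ioi] with t ht z hz
          have ht0 : (0:ℝ) < t := ht
          have hzc := hsub z hz
          have hb1 := hMb (l+1) t z y' ht0 (hdist z hzc y' hy') (hxR z hzc) (hyR y' hy')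
          have hb2 := hMb l t z y' ht0 (hdist z hzc y' hy') (hxR z hzc) (hyR y' hy')
          have hzabs : |z| ≤ |x| + δ0 / 4 := by
            rw [Metric.mem_closedBall] at hzc
            have h1 : |z| ≤ |z - x| + |x| := by
              have := abs_add_le (z - x) x; simpa using this
            rw [← Real.dist_eq] at h1
            linarith
          calc ‖t ^ ((k:ℝ) / 2 - 1) * (PsiE (l+1) t z y' - z * PsiE l t z y')‖
              = t ^ ((k:ℝ) / 2 - 1) * |PsiE (l+1) t z y' - z * PsiE l t z y'| := by
                rw [norm_mul, Real.norm_eq_abs, Real.norm_eq_abs,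
                  abs_of_nonneg (Real.rpow_nonneg ht0.le _)]
            _ ≤ t ^ ((k:ℝ) / 2 - 1) * (M (l+1) * Real.exp (-(t / 4)) +
                (|x| + δ0 / 4) * (M l * Real.exp (-(t / 4)))) := by
                apply mul_le_mul_of_nonneg_left _ (Real.rpow_nonneg ht0.le _)
                calc |PsiE (l+1) t z y' - z * PsiE l t z y'|
                    ≤ |PsiE (l+1) t z y'| + |z| * |PsiE l t z y'| := by
                      have := abs_sub (PsiE (l+1) t z y') (z * PsiE l t z y')
                      rw [abs_mul] at this
                      exact this
                  _ ≤ M (l+1) * Real.exp (-(t / 4)) +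
                      (|x| + δ0 / 4) * (M l * Real.exp (-(t / 4))) := by
                      have h3 : |z| * |PsiE l t z y'| ≤ (|x| + δ0 / 4) *
                          (M l * Real.exp (-(t / 4))) :=
                        mul_le_mul hzabs hb2 (abs_nonneg _) (by positivity)
                      linarith
            _ = (M (l+1) + (|x| + δ0 / 4) * M l) *
                (t ^ ((k:ℝ) / 2 - 1) * Real.exp (-(1/4 * t))) := by
                rw [show -(t / 4) = -(1/4 * t) by ring]; ring)
        (((int_exp_rpow ha_exp (by norm_num : (0:ℝ) < 1/4)).const_mul _))
        (by
          filter_upwards [self_mem_ae_restrict measurableSet_Ioi] with t ht z hz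
          have ht0 : (0:ℝ) < t := ht
          exact (psiE_hasDeriv ht0 y' l z).const_mul (t ^ ((k:ℝ) / 2 - 1)))
      have hD2 := key.2.const_mul (1 / Real.Gamma ((k:ℝ) / 2))
      have heq : (fun z => rieszKernelHl k l z y')
          = fun z => (1 / Real.Gamma ((k:ℝ) / 2)) *
            ∫ t in Ioi (0:ℝ), t ^ ((k:ℝ) / 2 - 1) * PsiE l t z y' :=
        funext fun z => hker l z y'
      rw [← heq] at hD2
      have i1 := hInt (l+1) z' y' hz'c hy'
      have i2 := hInt l z' y' hz'c hy'
      have hval : (1 / Real.Gamma ((k:ℝ) / 2)) *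
          ∫ t in Ioi (0:ℝ), t ^ ((k:ℝ) / 2 - 1) * (PsiE (l+1) t z' y' - z' * PsiE l t z' y')
          = rieszKernelHl k (l+1) z' y' - z' * rieszKernelHl k l z' y' := by
        have e : (fun t => t ^ ((k:ℝ) / 2 - 1) * (PsiE (l+1) t z' y' - z' * PsiE l t z' y'))
            = fun t => (t ^ ((k:ℝ) / 2 - 1) * PsiE (l+1) t z' y') -
              z' * (t ^ ((k:ℝ) / 2 - 1) * PsiE l t z' y') := by
          funext t; ring
        rw [e, integral_sub i1 (i2.const_mul z'), integral_const_mul,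
          hker (l+1) z' y', hker l z' y']
        ring
      rw [hval] at hD2
      exact hD2
    -- uniform bound on the kernel
    obtain ⟨I4, hI4eq⟩ : ∃ I4 : ℝ,
        I4 = ∫ t in Ioi (0:ℝ), t ^ ((k:ℝ) / 2 - 1) * Real.exp (-(1/4 * t)) := ⟨_, rfl⟩
    have hI4nn : 0 ≤ I4 := by
      rw [hI4eq]
      apply setIntegral_nonneg measurableSet_Ioi
      intro t ht
      have ht0 : (0:ℝ) ≤ t := (le_of_lt ht)
      positivity
    have hkerBound : ∀ (l : ℕ), ∀ z ∈ Metric.closedBall x (δ0 / 4), ∀ y' ∈ tsupport φ,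
        |rieszKernelHl k l z y'| ≤ |1 / Real.Gamma ((k:ℝ) / 2)| * (M l * I4) := by
      intro l z hz y' hy'
      rw [hker l z y', abs_mul]
      apply mul_le_mul_of_nonneg_left _ (abs_nonneg _)
      have hnorm : ‖∫ t in Ioi (0:ℝ), t ^ ((k:ℝ) / 2 - 1) * PsiE l t z y'‖
          ≤ ∫ t in Ioi (0:ℝ), M l * (t ^ ((k:ℝ) / 2 - 1) * Real.exp (-(1/4 * t))) := by
        apply norm_integral_le_of_norm_le
          ((int_exp_rpow ha_exp (by norm_num : (0:ℝ) < 1/4)).const_mul (M l))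
        filter_upwards [self_mem_ae_restrict measurableSet_Ioi] with t ht
        have ht0 : (0:ℝ) < t := ht
        have hb := hMb l t z y' ht0 (hdist z hz y' hy') (hxR z hz) (hyR y' hy')
        calc ‖t ^ ((k:ℝ) / 2 - 1) * PsiE l t z y'‖
            = t ^ ((k:ℝ) / 2 - 1) * |PsiE l t z y'| := by
              rw [norm_mul, Real.norm_eq_abs, Real.norm_eq_abs,
                abs_of_nonneg (Real.rpow_nonneg ht0.le _)]
          _ ≤ t ^ ((k:ℝ) / 2 - 1) * (M l * Real.exp (-(t / 4))) :=
              mul_le_mul_of_nonneg_left hb (Real.rpow_nonneg ht0.le _)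
          _ = M l * (t ^ ((k:ℝ) / 2 - 1) * Real.exp (-(1/4 * t))) := by
              rw [show -(t / 4) = -(1/4 * t) by ring]; ring
      rw [integral_const_mul, ← hI4eq] at hnorm
      calc |∫ t in Ioi (0:ℝ), t ^ ((k:ℝ) / 2 - 1) * PsiE l t z y'|
          = ‖∫ t in Ioi (0:ℝ), t ^ ((k:ℝ) / 2 - 1) * PsiE l t z y'‖ :=
            (Real.norm_eq_abs _).symm
        _ ≤ M l * I4 := hnorm
    -- measurability in y
    have hmeasY : ∀ (l : ℕ) (z : ℝ),
        AEStronglyMeasurable (fun y' => rieszKernelHl k l z y' * φ y') volume := by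
      intro l z
      have h1 : (fun y' => rieszKernelHl k l z y')
          = fun y' => (1 / Real.Gamma ((k:ℝ) / 2)) *
            ∫ t in Ioi (0:ℝ), t ^ ((k:ℝ) / 2 - 1) * PsiE l t z y' :=
        funext fun y' => hker l z y'
      have h2 : AEStronglyMeasurable (fun y' => rieszKernelHl k l z y') volume := by
        rw [h1]
        exact (psiE_meas_y l _ z).const_mul _
      exact h2.mul hφ.continuous.aestronglyMeasurable
    have hφint : Integrable φ := hφ.continuous.integrable_of_hasCompactSupport hφc
    -- integrability in y
    have hintY : ∀ (l : ℕ), ∀ z ∈ Metric.closedBall x (δ0 / 4),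
        Integrable (fun y' => rieszKernelHl k l z y' * φ y') := by
      intro l z hz
      apply Integrable.mono' ((hφint.abs).const_mul (|1 / Real.Gamma ((k:ℝ) / 2)| * (M l * I4)))
        (hmeasY l z)
      filter_upwards with y'
      by_cases hy0 : φ y' = 0
      · rw [hy0, mul_zero, norm_zero, abs_zero, mul_zero]
      · have hy' : y' ∈ tsupport φ := subset_tsupport φ hy0
        rw [Real.norm_eq_abs, abs_mul]
        exact mul_le_mul_of_nonneg_right (hkerBound l z hz y' hy') (abs_nonneg _)
    -- derivative of the y-integral
    have hFderiv : ∀ (l : ℕ), ∀ z' ∈ Metric.ball x (δ0 / 4),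
        HasDerivAt (fun z => ∫ y', rieszKernelHl k l z y' * φ y')
          (∫ y', (rieszKernelHl k (l+1) z' y' - z' * rieszKernelHl k l z' y') * φ y') z' := by
      intro l z' hz'
      have hz'c : z' ∈ Metric.closedBall x (δ0 / 4) := Metric.ball_subset_closedBall hz'
      have hε : 0 < δ0 / 4 - dist z' x := by
        rw [Metric.mem_ball] at hz'; linarith
      have hsubB : ∀ z ∈ Metric.ball z' (δ0 / 4 - dist z' x), z ∈ Metric.ball x (δ0 / 4) := by
        intro z hz
        rw [Metric.mem_ball] at hz ⊢
        have := dist_triangle z z' x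
        linarith
      have key := hasDerivAt_integral_of_dominated_loc_of_deriv_le
        (F := fun z y' => rieszKernelHl k l z y' * φ y')
        (F' := fun z y' => (rieszKernelHl k (l+1) z y' - z * rieszKernelHl k l z y') * φ y')
        (x₀ := z')
        (bound := fun y' => (|1 / Real.Gamma ((k:ℝ) / 2)| * (M (l+1) * I4) +
          (|x| + δ0 / 4) * (|1 / Real.Gamma ((k:ℝ) / 2)| * (M l * I4))) * |φ y'|)
        (μ := volume) (Metric.ball_mem_nhds z' hε)
        (Eventually.of_forall fun z => hmeasY l z)
        (hintY l z' hz'c)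
        (by
          show AEStronglyMeasurable (fun y' => (rieszKernelHl k (l+1) z' y' -
            z' * rieszKernelHl k l z' y') * φ y') volume
          have e : (fun y' => (rieszKernelHl k (l+1) z' y' - z' * rieszKernelHl k l z' y') *
              φ y') = fun y' => (rieszKernelHl k (l+1) z' y' * φ y') -
                z' * (rieszKernelHl k l z' y' * φ y') := by
            funext y'; ring
          rw [e]
          exact (hmeasY (l+1) z').sub ((hmeasY l z').const_mul z'))
        (by
          filter_upwards with y' z hz
          by_cases hy0 : φ y' = 0
          · rw [hy0, mul_zero, norm_zero, abs_zero, mul_zero]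
          · have hy' : y' ∈ tsupport φ := subset_tsupport φ hy0
            have hzc : z ∈ Metric.closedBall x (δ0 / 4) :=
              Metric.ball_subset_closedBall (hsubB z hz)
            have hzabs : |z| ≤ |x| + δ0 / 4 := by
              rw [Metric.mem_closedBall] at hzc
              have h1 : |z| ≤ |z - x| + |x| := by
                have := abs_add_le (z - x) x; simpa using this
              rw [← Real.dist_eq] at h1
              linarith
            rw [Real.norm_eq_abs, abs_mul]
            apply mul_le_mul_of_nonneg_right _ (abs_nonneg _)
            calc |rieszKernelHl k (l+1) z y' - z * rieszKernelHl k l z y'|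
                ≤ |rieszKernelHl k (l+1) z y'| + |z| * |rieszKernelHl k l z y'| := by
                  have := abs_sub (rieszKernelHl k (l+1) z y') (z * rieszKernelHl k l z y')
                  rw [abs_mul] at this
                  exact this
              _ ≤ |1 / Real.Gamma ((k:ℝ) / 2)| * (M (l+1) * I4) +
                  (|x| + δ0 / 4) * (|1 / Real.Gamma ((k:ℝ) / 2)| * (M l * I4)) := by
                  have h3 := hkerBound (l+1) z hzc y' hy'
                  have h4 : |z| * |rieszKernelHl k l z y'| ≤ (|x| + δ0 / 4) *
                      (|1 / Real.Gamma ((k:ℝ) / 2)| * (M l * I4)) :=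
                    mul_le_mul hzabs (hkerBound l z hzc y' hy') (abs_nonneg _)
                      (by positivity)
                  linarith)
        ((hφint.abs).const_mul _)
        (by
          filter_upwards with y' z hz
          by_cases hy0 : φ y' = 0
          · simp only [hy0, mul_zero]
            exact hasDerivAt_const z 0
          · have hy' : y' ∈ tsupport φ := subset_tsupport φ hy0
            exact (hkerDeriv l z (hsubB z hz) y' hy').mul_const (φ y'))
      exact key.2
    -- induction over l
    have hkey : ∀ l : ℕ, ∀ z' ∈ Metric.ball x (δ0 / 4),
        Dh^[l] (Hinv k φ) z' = ∫ y', rieszKernelHl k l z' y' * φ y' := by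
      intro l
      induction l with
      | zero =>
        intro z' _
        simp only [Function.iterate_zero, id_eq, Hinv]
        have e : ∀ y', rieszKernelHl k 0 z' y' = hermiteK k z' y' := by
          intro y'
          rw [rieszKernelHl, hermiteK]
          simp only [Function.iterate_zero, id_eq]
        simp only [e]
      | succ l ih =>
        intro z' hz'
        rw [Function.iterate_succ_apply']
        show deriv (Dh^[l] (Hinv k φ)) z' + z' * Dh^[l] (Hinv k φ) z' = _
        have hev : Dh^[l] (Hinv k φ)
            =ᶠ[nhds z'] fun z => ∫ y', rieszKernelHl k l z y' * φ y' := by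
          filter_upwards [Metric.isOpen_ball.mem_nhds hz'] with z hz
          exact ih z hz
        rw [hev.deriv_eq, (hFderiv l z' hz').deriv, ih z' hz']
        have i1 := hintY (l+1) z' (Metric.ball_subset_closedBall hz')
        have i2 := hintY l z' (Metric.ball_subset_closedBall hz')
        have e : (fun y' => (rieszKernelHl k (l+1) z' y' - z' * rieszKernelHl k l z' y') *
            φ y') = fun y' => (rieszKernelHl k (l+1) z' y' * φ y') -
              z' * (rieszKernelHl k l z' y' * φ y') := by
          funext y'; ring
        rw [e, integral_sub i1 (i2.const_mul z'), integral_const_mul]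
        ring
    exact ⟨hintY k x (Metric.mem_closedBall_self (by linarith)),
      hkey k x (Metric.mem_ball_self (by linarith))⟩
end

section
/- Let α > -1 and j ∈ ℕ with j ≥ 1. Then for every m ∈ ℕ with 0 ≤ m ≤ ⌊j/2⌋, one has Σ_{n=0}^{m} Σ_{l=2n}^{j} (-1)^{l+n} C(j,l) · (E_{l,n} / 2^{l-2n}) · [α+l-n, m-n] = 0. -/
open MeasureTheory Real Set Filter Topology

section AuxHankel
open Polynomial Finset


/-- Alternating binomial sums annihilate polynomials of degree < j. -/
lemma diff_lemma : ∀ (j : ℕ) (p : Polynomial ℝ), p.degree < j →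
    ∑ l ∈ Finset.range (j + 1), (-1 : ℝ) ^ l * (j.choose l) * p.eval (l : ℝ) = 0 := by
  intro j
  induction j with
  | zero =>
    intro p hp
    have hp0 : p = 0 := by
      by_contra h
      rw [Polynomial.degree_eq_natDegree h] at hp
      exact absurd hp (by exact_mod_cast Nat.not_lt_zero _)
    simp [hp0]
  | succ j ih =>
    intro p hp
    set q : Polynomial ℝ := p.comp (X + 1) - p with hq
    have hqdeg : q.degree < j := by
      rcases eq_or_ne p 0 with rfl | hp0
      · have hq0 : q = 0 := by simp [hq]
        rw [hq0, Polynomial.degree_zero]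
        exact WithBot.bot_lt_coe j
      · have hX : (X + 1 : Polynomial ℝ) = X + C 1 := by simp
        have hnd : ((X + 1 : Polynomial ℝ)).natDegree = 1 := by
          rw [hX]; exact natDegree_X_add_C 1
        have hlc : (p.comp (X + 1)).leadingCoeff = p.leadingCoeff := by
          rw [Polynomial.leadingCoeff_comp (by rw [hnd]; norm_num)]
          rw [hX, Polynomial.Monic.leadingCoeff (monic_X_add_C 1), one_pow, mul_one]
        have hc0 : p.comp (X + 1) ≠ 0 := by
          intro h
          apply hp0
          rw [← Polynomial.leadingCoeff_eq_zero, ← hlc, h, Polynomial.leadingCoeff_zero]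
        have hdeq : (p.comp (X + 1)).degree = p.degree := by
          rw [Polynomial.degree_eq_natDegree hc0, Polynomial.degree_eq_natDegree hp0,
            Polynomial.natDegree_comp, hnd, mul_one]
        have hsub := Polynomial.degree_sub_lt hdeq hc0 hlc
        have hple : p.degree ≤ (j : WithBot ℕ) := by
          rcases eq_or_ne p 0 with rfl | h0
          · simp
          · rw [Polynomial.degree_eq_natDegree h0] at hp ⊢
            exact_mod_cast Nat.lt_succ_iff.mp (by exact_mod_cast hp)
        exact lt_of_lt_of_le (hdeq ▸ hsub) hple
    have hqev : ∀ l : ℕ, q.eval (l : ℝ) = p.eval ((l : ℝ) + 1) - p.eval (l : ℝ) := by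
      intro l; simp [hq, Polynomial.eval_comp]
    have key : ∑ l ∈ Finset.range (j + 2), (-1 : ℝ) ^ l * ((j+1).choose l) * p.eval (l : ℝ)
        = - ∑ l ∈ Finset.range (j + 1), (-1 : ℝ) ^ l * (j.choose l) * q.eval (l : ℝ) := by
      have h1 := Finset.sum_range_succ'
        (fun l => (-1 : ℝ) ^ l * ((j+1).choose l) * p.eval (l : ℝ)) (j + 1)
      have h2 := Finset.sum_range_succ'
        (fun l => (-1 : ℝ) ^ l * (j.choose l) * p.eval (l : ℝ)) (j + 1)
      have h3 := Finset.sum_range_succ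
        (fun l => (-1 : ℝ) ^ l * (j.choose l) * p.eval (l : ℝ)) (j + 1)
      have hch : ∀ l, ((j+1).choose (l+1) : ℝ) = (j.choose l : ℝ) + (j.choose (l+1) : ℝ) := by
        intro l; exact_mod_cast congrArg (Nat.cast : ℕ → ℝ) (Nat.choose_succ_succ j l)
      rw [h1]
      have hsplit : ∑ l ∈ Finset.range (j + 1),
          (-1 : ℝ) ^ (l+1) * ((j+1).choose (l+1)) * p.eval ((l+1 : ℕ) : ℝ)
          = ∑ l ∈ Finset.range (j + 1),
              ((-1 : ℝ) ^ (l+1) * (j.choose l) * p.eval ((l+1 : ℕ) : ℝ)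
               + (-1 : ℝ) ^ (l+1) * (j.choose (l+1)) * p.eval ((l+1 : ℕ) : ℝ)) := by
        apply Finset.sum_congr rfl
        intro l _
        rw [hch l]; ring
      rw [hsplit, Finset.sum_add_distrib]
      have hB : ∑ l ∈ Finset.range (j + 1),
          (-1 : ℝ) ^ (l+1) * (j.choose (l+1)) * p.eval ((l+1 : ℕ) : ℝ)
          = ∑ l ∈ Finset.range (j + 1), (-1 : ℝ) ^ l * (j.choose l) * p.eval (l : ℝ)
            - (-1 : ℝ) ^ 0 * (j.choose 0) * p.eval ((0 : ℕ) : ℝ) := by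
        have h4 : ∑ l ∈ Finset.range (j + 2), (-1 : ℝ) ^ l * (j.choose l) * p.eval (l : ℝ)
            = ∑ l ∈ Finset.range (j + 1), (-1 : ℝ) ^ l * (j.choose l) * p.eval (l : ℝ) := by
          rw [h3, Nat.choose_succ_self]; simp
        rw [← h4, h2]; ring
      have hc : (-1 : ℝ) ^ 0 * (((j+1).choose 0 : ℕ) : ℝ) * p.eval ((0 : ℕ) : ℝ)
          = (-1 : ℝ) ^ 0 * ((j.choose 0 : ℕ) : ℝ) * p.eval ((0 : ℕ) : ℝ) := by simp
      rw [hB, hc]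
      have hrw : ∀ a b c : ℝ, a + (b - c) + c = a + b := by intros; ring
      rw [hrw]
      rw [eq_neg_iff_add_eq_zero, ← Finset.sum_add_distrib, ← Finset.sum_add_distrib]
      apply Finset.sum_eq_zero
      intro l _
      rw [hqev l]
      push_cast
      ring
    rw [show j + 1 + 1 = j + 2 from rfl] at *
    rw [key, ih q hqdeg, neg_zero]

noncomputable def quadP (α : ℝ) (n i : ℕ) : Polynomial ℝ :=
  Polynomial.C 4 * (Polynomial.X + Polynomial.C (α - n)) ^ 2 - Polynomial.C ((2 * (i : ℝ) + 1) ^ 2)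

noncomputable def hankP (α : ℝ) (n r : ℕ) : Polynomial ℝ :=
  Polynomial.C (1 / (2 ^ (2 * r) * (Nat.factorial r : ℝ))) * ∏ i ∈ Finset.range r, quadP α n i

noncomputable def QP (α : ℝ) (m n : ℕ) : Polynomial ℝ :=
  Polynomial.C ((-1 : ℝ) ^ n / (Nat.factorial n : ℝ)) * descPochhammer ℝ (2 * n) * hankP α n (m - n)

lemma quadP_coeff_two (α : ℝ) (n i : ℕ) : (quadP α n i).coeff 2 = 4 := by
  have h : quadP α n i = Polynomial.C 4 * Polynomial.X ^ 2
      + Polynomial.C (8 * (α - n)) * Polynomial.X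
      + Polynomial.C (4 * (α - n) ^ 2 - (2 * (i : ℝ) + 1) ^ 2) := by
    rw [quadP]
    simp only [map_mul, map_add, map_sub, map_pow, map_ofNat, map_one]
    ring
  rw [h]
  simp only [Polynomial.coeff_add, Polynomial.coeff_C_mul, Polynomial.coeff_X_pow,
    Polynomial.coeff_X, Polynomial.coeff_C]
  norm_num

lemma quadP_natDegree (α : ℝ) (n i : ℕ) : (quadP α n i).natDegree = 2 := by
  have hle : (quadP α n i).natDegree ≤ 2 := by
    rw [quadP]
    apply (Polynomial.natDegree_sub_le _ _).trans
    simp only [Polynomial.natDegree_C, max_le_iff]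
    constructor
    · apply (Polynomial.natDegree_mul_le).trans
      simp only [Polynomial.natDegree_C, zero_add]
      rw [Polynomial.natDegree_pow, Polynomial.natDegree_X_add_C]
    · omega
  have hge : 2 ≤ (quadP α n i).natDegree :=
    Polynomial.le_natDegree_of_ne_zero (by rw [quadP_coeff_two]; norm_num)
  omega

lemma quadP_ne_zero (α : ℝ) (n i : ℕ) : quadP α n i ≠ 0 := by
  intro h
  have := quadP_coeff_two α n i
  rw [h] at this
  simp at this

lemma quadP_leadingCoeff (α : ℝ) (n i : ℕ) : (quadP α n i).leadingCoeff = 4 := by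
  rw [Polynomial.leadingCoeff, quadP_natDegree, quadP_coeff_two]

lemma hankP_ne_zero (α : ℝ) (n r : ℕ) : hankP α n r ≠ 0 := by
  rw [hankP]
  apply mul_ne_zero
  · rw [Ne, Polynomial.C_eq_zero]
    positivity
  · exact Finset.prod_ne_zero_iff.mpr fun i _ => quadP_ne_zero α n i

lemma hankP_natDegree (α : ℝ) (n r : ℕ) : (hankP α n r).natDegree = 2 * r := by
  rw [hankP, Polynomial.natDegree_mul (by
      rw [Ne, Polynomial.C_eq_zero]; positivity)
    (Finset.prod_ne_zero_iff.mpr fun i _ => quadP_ne_zero α n i)]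
  rw [Polynomial.natDegree_C, Polynomial.natDegree_prod _ _ fun i _ => quadP_ne_zero α n i]
  simp [quadP_natDegree, mul_comm]

lemma hankP_leadingCoeff (α : ℝ) (n r : ℕ) :
    (hankP α n r).leadingCoeff = 1 / (Nat.factorial r : ℝ) := by
  rw [hankP, Polynomial.leadingCoeff_mul, Polynomial.leadingCoeff_prod]
  simp only [Polynomial.leadingCoeff_C, quadP_leadingCoeff, Finset.prod_const, Finset.card_range]
  rw [pow_mul]
  norm_num

lemma QP_ne_zero (α : ℝ) (m n : ℕ) : QP α m n ≠ 0 := by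
  rw [QP]
  apply mul_ne_zero (mul_ne_zero ?_ ?_) (hankP_ne_zero α n (m - n))
  · rw [Ne, Polynomial.C_eq_zero]
    apply div_ne_zero
    · positivity
    · exact_mod_cast (Nat.factorial_pos n).ne'
  · exact (monic_descPochhammer ℝ (2 * n)).ne_zero

lemma QP_natDegree (α : ℝ) (m n : ℕ) (h : n ≤ m) : (QP α m n).natDegree = 2 * m := by
  rw [QP, Polynomial.natDegree_mul (mul_ne_zero (by
        rw [Ne, Polynomial.C_eq_zero]
        apply div_ne_zero (by positivity)
        exact_mod_cast (Nat.factorial_pos n).ne')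
      (monic_descPochhammer ℝ (2 * n)).ne_zero) (hankP_ne_zero α n (m - n)),
    Polynomial.natDegree_mul (by
        rw [Ne, Polynomial.C_eq_zero]
        apply div_ne_zero (by positivity)
        exact_mod_cast (Nat.factorial_pos n).ne')
      (monic_descPochhammer ℝ (2 * n)).ne_zero,
    Polynomial.natDegree_C, descPochhammer_natDegree, hankP_natDegree]
  omega

lemma QP_coeff (α : ℝ) (m n : ℕ) (h : n ≤ m) :
    (QP α m n).coeff (2 * m) = (-1 : ℝ) ^ n / (Nat.factorial n * Nat.factorial (m - n)) := by
  rw [← QP_natDegree α m n h, Polynomial.coeff_natDegree, QP,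
    Polynomial.leadingCoeff_mul, Polynomial.leadingCoeff_mul,
    Polynomial.leadingCoeff_C, (monic_descPochhammer ℝ (2 * n)).leadingCoeff,
    hankP_leadingCoeff]
  field_simp

lemma QP_eval (α : ℝ) (m n l : ℕ) :
    (QP α m n).eval (l : ℝ) =
      ((-1 : ℝ) ^ n * (l.descFactorial (2 * n) : ℝ) / (Nat.factorial n : ℝ)) *
        hankel (α + l - n) (m - n) := by
  have hprod : ∀ i ∈ Finset.range (m - n), (quadP α n i).eval (l : ℝ)
      = 4 * (α + l - n) ^ 2 - (2 * (i : ℝ) + 1) ^ 2 := by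
    intro i _
    simp only [quadP, Polynomial.eval_sub, Polynomial.eval_mul, Polynomial.eval_pow,
      Polynomial.eval_add, Polynomial.eval_X, Polynomial.eval_C]
    ring
  rw [QP, hankP]
  simp only [Polynomial.eval_mul, Polynomial.eval_C, Polynomial.eval_prod]
  rw [Finset.prod_congr rfl hprod, descPochhammer_eval_eq_descFactorial]
  rw [hankel]
  ring

lemma alt_fact_sum (m : ℕ) (hm : 1 ≤ m) :
    ∑ n ∈ Finset.range (m + 1),
      (-1 : ℝ) ^ n / (Nat.factorial n * Nat.factorial (m - n)) = 0 := by
  have h := Int.alternating_sum_range_choose_of_ne (show m ≠ 0 by omega)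
  have h' : ∑ n ∈ Finset.range (m + 1), (-1 : ℝ) ^ n * (m.choose n) = 0 := by
    have := congrArg (fun z : ℤ => (z : ℝ)) h
    push_cast at this
    simpa using this
  have hmf : ((m.factorial : ℝ)) ≠ 0 := by exact_mod_cast (Nat.factorial_pos m).ne'
  have key : ∑ n ∈ Finset.range (m + 1),
      (-1 : ℝ) ^ n / (Nat.factorial n * Nat.factorial (m - n))
      = (∑ n ∈ Finset.range (m + 1), (-1 : ℝ) ^ n * (m.choose n)) / m.factorial := by
    rw [Finset.sum_div]
    apply Finset.sum_congr rfl
    intro n hn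
    have hnm : n ≤ m := Nat.lt_succ_iff.mp (Finset.mem_range.mp hn)
    have hnf : ((n.factorial : ℝ)) ≠ 0 := by exact_mod_cast (Nat.factorial_pos n).ne'
    have hmnf : (((m - n).factorial : ℝ)) ≠ 0 := by
      exact_mod_cast (Nat.factorial_pos (m - n)).ne'
    rw [Nat.cast_choose ℝ hnm]
    field_simp
  rw [key, h', zero_div]

lemma degP_lt (α : ℝ) (j m : ℕ) (hj : 1 ≤ j) (hm : m ≤ j / 2) :
    (∑ n ∈ Finset.range (m + 1), QP α m n).degree < (j : WithBot ℕ) := by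
  rcases Nat.eq_zero_or_pos m with rfl | hm1
  · have : (∑ n ∈ Finset.range (0 + 1), QP α 0 n).natDegree = 0 := by
      simpa using QP_natDegree α 0 0 le_rfl
    have hle := Polynomial.degree_le_natDegree (p := ∑ n ∈ Finset.range (0 + 1), QP α 0 n)
    rw [this] at hle
    exact lt_of_le_of_lt hle (by exact_mod_cast hj)
  · have h2m : 2 * m ≤ j := by omega
    have key : (∑ n ∈ Finset.range (m + 1), QP α m n).degree < ((2 * m : ℕ) : WithBot ℕ) := by
      rw [Polynomial.degree_lt_iff_coeff_zero]
      intro k hk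
      rw [Polynomial.finset_sum_coeff]
      rcases eq_or_lt_of_le hk with rfl | hk'
      · have : ∀ n ∈ Finset.range (m + 1),
            (QP α m n).coeff (2 * m) = (-1 : ℝ) ^ n / (Nat.factorial n * Nat.factorial (m - n)) :=
          fun n hn => QP_coeff α m n (Nat.lt_succ_iff.mp (Finset.mem_range.mp hn))
        rw [Finset.sum_congr rfl this]
        exact alt_fact_sum m hm1
      · apply Finset.sum_eq_zero
        intro n hn
        apply Polynomial.coeff_eq_zero_of_natDegree_lt
        rw [QP_natDegree α m n (Nat.lt_succ_iff.mp (Finset.mem_range.mp hn))]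
        exact hk'
    exact lt_of_lt_of_le key (by exact_mod_cast h2m)


end AuxHankel

/-- the technical combinatorial lemma on sums of Hankel symbols. -/
theorem hankel_sum_eq_zero (α : ℝ) (hα : -1 < α) (j : ℕ) (hj : 1 ≤ j)
    (m : ℕ) (hm : m ≤ j / 2) :
    ∑ n ∈ Finset.range (m + 1), ∑ l ∈ Finset.Icc (2 * n) j,
      (-1 : ℝ) ^ (l + n) * (Nat.choose j l) * (Econst l n / 2 ^ (l - 2 * n)) *
        hankel (α + l - n) (m - n) = 0 := by
  have step1 : ∀ n ∈ Finset.range (m + 1),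
      ∑ l ∈ Finset.Icc (2 * n) j,
        (-1 : ℝ) ^ (l + n) * (Nat.choose j l) * (Econst l n / 2 ^ (l - 2 * n)) *
          hankel (α + l - n) (m - n)
      = ∑ l ∈ Finset.range (j + 1), (-1 : ℝ) ^ l * (j.choose l) * (QP α m n).eval (l : ℝ) := by
    intro n hn
    have hnm : n ≤ m := Nat.lt_succ_iff.mp (Finset.mem_range.mp hn)
    have h2nj : 2 * n ≤ j := by omega
    rw [Finset.range_eq_Ico,
      ← Finset.sum_Ico_consecutive _ (Nat.zero_le (2 * n)) (by omega : 2 * n ≤ j + 1)]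
    have hzero : ∑ l ∈ Finset.Ico 0 (2 * n),
        (-1 : ℝ) ^ l * (j.choose l) * (QP α m n).eval (l : ℝ) = 0 := by
      apply Finset.sum_eq_zero
      intro l hl
      have hl2 : l < 2 * n := (Finset.mem_Ico.mp hl).2
      rw [QP_eval, Nat.descFactorial_eq_zero_iff_lt.mpr hl2]
      simp
    rw [hzero, zero_add, ← Finset.Ico_add_one_right_eq_Icc]
    apply Finset.sum_congr rfl
    intro l hl
    have h2nl : 2 * n ≤ l := (Finset.mem_Ico.mp hl).1
    rw [QP_eval]
    have hE : Econst l n / 2 ^ (l - 2 * n)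
        = (l.descFactorial (2 * n) : ℝ) / (Nat.factorial n : ℝ) := by
      have hfac : ((l - 2 * n).factorial : ℝ) * (l.descFactorial (2 * n) : ℝ)
          = (l.factorial : ℝ) := by
        exact_mod_cast congrArg (Nat.cast : ℕ → ℝ) (Nat.factorial_mul_descFactorial h2nl)
      have hnf : ((n.factorial : ℝ)) ≠ 0 := by exact_mod_cast (Nat.factorial_pos n).ne'
      have hlnf : (((l - 2 * n).factorial : ℝ)) ≠ 0 := by
        exact_mod_cast (Nat.factorial_pos (l - 2 * n)).ne'
      have h2e : ((2 : ℝ) ^ (l - 2 * n)) ≠ 0 := by positivity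
      rw [Econst, ← hfac]
      field_simp
    rw [hE, pow_add]
    ring
  rw [Finset.sum_congr rfl step1]
  rw [Finset.sum_comm]
  have : ∀ l ∈ Finset.range (j + 1),
      ∑ n ∈ Finset.range (m + 1), (-1 : ℝ) ^ l * (j.choose l) * (QP α m n).eval (l : ℝ)
      = (-1 : ℝ) ^ l * (j.choose l) * (∑ n ∈ Finset.range (m + 1), QP α m n).eval (l : ℝ) := by
    intro l _
    rw [Polynomial.eval_finset_sum, Finset.mul_sum]
  rw [Finset.sum_congr rfl this]
  exact diff_lemma j _ (degP_lt α j m hj hm)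
end

section
/- Let α > -1 and j ∈ ℕ. For every t, x, y ∈ (0,∞), writing u = 2xy e^{-t}/(1-e^{-2t}), the j-th derivative in x of the function x ↦ u^{-α} I_α(u) equals Σ_{n=0}^{⌊j/2⌋} E_{j,n} · (x^{j-2n} / 2^{j-n}) · (2y e^{-t}/(1-e^{-2t}))^{2(j-n)} · u^{-α+n-j} · I_{α-n+j}(u). -/
open MeasureTheory Real Set Filter Topology

noncomputable section BesselAux

noncomputable def pcoef (β : ℝ) (n : ℕ) : ℝ :=
  (2:ℝ) ^ (-β) / (4 ^ n * n.factorial * Real.Gamma (n + β + 1))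

noncomputable def pf (β c x : ℝ) : ℝ := ∑' n : ℕ, pcoef β n * (c * x) ^ (2 * n)

lemma gamma_arg_pos {β : ℝ} (hβ : -1 < β) (n : ℕ) : 0 < (n : ℝ) + β + 1 := by
  have : (0:ℝ) ≤ n := n.cast_nonneg; linarith

lemma pcoef_pos {β : ℝ} (hβ : -1 < β) (n : ℕ) : 0 < pcoef β n := by
  have hg : 0 < Real.Gamma ((n : ℝ) + β + 1) := Real.Gamma_pos_of_pos (gamma_arg_pos hβ n)
  have h2 : (0:ℝ) < (2:ℝ) ^ (-β) := Real.rpow_pos_of_pos two_pos _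
  have hf : (0:ℝ) < (n.factorial : ℝ) := by exact_mod_cast n.factorial_pos
  rw [pcoef]
  positivity

lemma pcoef_succ {β : ℝ} (hβ : -1 < β) (n : ℕ) :
    pcoef β (n + 1) * (4 * ((n:ℝ) + 1) * ((n : ℝ) + β + 1)) = pcoef β n := by
  have hne : ((n : ℝ) + β + 1) ≠ 0 := (gamma_arg_pos hβ n).ne'
  have hg : Real.Gamma (((n + 1 : ℕ) : ℝ) + β + 1) = ((n : ℝ) + β + 1) * Real.Gamma ((n:ℝ) + β + 1) := by
    rw [show ((n + 1 : ℕ) : ℝ) + β + 1 = ((n : ℝ) + β + 1) + 1 by push_cast; ring,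
      Real.Gamma_add_one hne]
  have hgne : Real.Gamma ((n:ℝ) + β + 1) ≠ 0 := (Real.Gamma_pos_of_pos (gamma_arg_pos hβ n)).ne'
  have hfact : (((n+1).factorial : ℕ) : ℝ) = ((n:ℝ) + 1) * n.factorial := by
    rw [Nat.factorial_succ]; push_cast; ring
  have hfne : ((n.factorial : ℕ) : ℝ) ≠ 0 := by exact_mod_cast n.factorial_ne_zero
  have h1 : ((n:ℝ)+1) ≠ 0 := by positivity
  rw [pcoef, pcoef, hg, hfact]
  rw [pow_succ]
  field_simp

lemma pcoef_shift {β : ℝ} (hβ : -1 < β) (n : ℕ) :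
    pcoef β (n + 1) * (2 * ((n : ℝ) + 1)) = pcoef (β + 1) n := by
  have hfact : (((n+1).factorial : ℕ) : ℝ) = ((n:ℝ) + 1) * n.factorial := by
    rw [Nat.factorial_succ]; push_cast; ring
  have hfne : ((n.factorial : ℕ) : ℝ) ≠ 0 := by exact_mod_cast n.factorial_ne_zero
  have harg : Real.Gamma (((n + 1 : ℕ) : ℝ) + β + 1) = Real.Gamma ((n : ℝ) + (β + 1) + 1) := by
    norm_num; ring_nf
  have h2 : (2:ℝ) ^ (-(β+1)) = (2:ℝ) ^ (-β) / 2 := by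
    rw [show -(β+1) = -β + (-1) from by ring, Real.rpow_add two_pos, Real.rpow_neg_one]
    ring
  have h1 : ((n:ℝ)+1) ≠ 0 := by positivity
  have h2ne : (2:ℝ) ^ (-β) ≠ 0 := (Real.rpow_pos_of_pos two_pos _).ne'
  rw [pcoef, pcoef, hfact, h2, harg, pow_succ]
  by_cases hg : Real.Gamma ((n : ℝ) + (β+1) + 1) = 0
  · rw [hg]; simp
  · field_simp
    ring

lemma summable_master {β : ℝ} (hβ : -1 < β) {A : ℝ} (hA : 0 ≤ A) :
    Summable (fun n : ℕ => pcoef β n * (2 * (n:ℝ) + 2) * A ^ n) := by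
  apply summable_of_ratio_norm_eventually_le (r := 1/2) (by norm_num)
  filter_upwards [eventually_ge_atTop (⌈A⌉₊ + 1)] with n hn
  have hAn : A ≤ (n : ℝ) := le_trans (Nat.le_ceil A) (by exact_mod_cast Nat.le_of_succ_le hn)
  have hn1 : (1:ℝ) ≤ (n:ℝ) := by
    have : 1 ≤ n := le_trans (Nat.le_add_left 1 _) hn
    exact_mod_cast this
  have hp := pcoef_pos hβ n
  have hps := pcoef_pos hβ (n+1)
  have hgp := gamma_arg_pos hβ n
  have hrec := pcoef_succ hβ n
  have hApow : (0:ℝ) ≤ A ^ n := pow_nonneg hA n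
  rw [Real.norm_eq_abs, Real.norm_eq_abs, abs_of_nonneg (by positivity), abs_of_nonneg (by positivity)]
  have key : pcoef β (n+1) * (2 * ((n:ℕ)+1:ℝ) + 2) * A ≤ 1/2 * (pcoef β n * (2*(n:ℝ)+2)) := by
    rw [← hrec]
    have hfac : (2 * ((n:ℝ)+1) + 2) * A ≤ 1/2 * ((4 * ((n:ℝ)+1) * ((n:ℝ)+β+1)) * (2*(n:ℝ)+2)) := by
      have h1 : (n:ℝ) + β + 1 ≥ (n:ℝ) := by linarith
      have s1 : (2 * ((n:ℝ)+1) + 2) * A ≤ (2 * ((n:ℝ)+1) + 2) * (n:ℝ) := by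
        apply mul_le_mul_of_nonneg_left hAn; positivity
      have s2 : (2 * ((n:ℝ)+1) + 2) * (n:ℝ) ≤ 1/2 * ((4 * ((n:ℝ)+1) * (n:ℝ)) * (2*(n:ℝ)+2)) := by
        nlinarith [hn1, mul_le_mul_of_nonneg_left (mul_le_mul_of_nonneg_left hn1 (le_trans zero_le_one hn1)) (le_trans zero_le_one hn1)]
      have s3 : (4 * ((n:ℝ)+1) * (n:ℝ)) * (2*(n:ℝ)+2) ≤ (4 * ((n:ℝ)+1) * ((n:ℝ)+β+1)) * (2*(n:ℝ)+2) := by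
        have hnn : (0:ℝ) ≤ (n:ℝ) := n.cast_nonneg
        gcongr <;> linarith
      linarith
    calc pcoef β (n+1) * (2 * ((n:ℕ)+1:ℝ) + 2) * A
        = pcoef β (n+1) * ((2 * ((n:ℝ)+1) + 2) * A) := by push_cast; ring
      _ ≤ pcoef β (n+1) * (1/2 * ((4 * ((n:ℝ)+1) * ((n:ℝ)+β+1)) * (2*(n:ℝ)+2))) := by
          exact mul_le_mul_of_nonneg_left hfac hps.le
      _ = 1/2 * (pcoef β (n+1) * (4 * ((n:ℝ)+1) * ((n:ℝ)+β+1)) * (2*(n:ℝ)+2)) := by ring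
  calc pcoef β (n+1) * (2 * ((n+1:ℕ):ℝ) + 2) * A ^ (n+1)
      = (pcoef β (n+1) * (2 * ((n:ℕ)+1:ℝ) + 2) * A) * A ^ n := by push_cast; ring
    _ ≤ (1/2 * (pcoef β n * (2*(n:ℝ)+2))) * A ^ n := mul_le_mul_of_nonneg_right key hApow
    _ = 1/2 * (pcoef β n * (2*(n:ℝ)+2) * A ^ n) := by ring

lemma pf_hasDerivAt {β : ℝ} (hβ : -1 < β) (c x : ℝ) :
    HasDerivAt (pf β c) (c ^ 2 * x * pf (β + 1) c x) x := by
  set B : ℝ := max 1 (|c| * (|x| + 1)) with hB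
  have hB1 : (1:ℝ) ≤ B := le_max_left _ _
  have hB0 : (0:ℝ) ≤ B := le_trans zero_le_one hB1
  set A : ℝ := B ^ 2 with hA
  have hA0 : (0:ℝ) ≤ A := by positivity
  set u : ℕ → ℝ := fun n => |c| * (pcoef β n * (2 * (n:ℝ) + 2) * A ^ n) with hu_def
  have hu : Summable u := (summable_master hβ hA0).mul_left _
  set g : ℕ → ℝ → ℝ := fun n y => pcoef β n * (c * y) ^ (2 * n) with hg_def
  set g' : ℕ → ℝ → ℝ := fun n y => pcoef β n * (((2 * n : ℕ) : ℝ) * (c * y) ^ (2 * n - 1) * c)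
    with hg'_def
  have hg : ∀ n y, y ∈ Metric.ball (0:ℝ) (|x| + 1) → HasDerivAt (g n) (g' n y) y := by
    intro n y _
    have h1 : HasDerivAt (fun z : ℝ => c * z) c y := by
      simpa using (hasDerivAt_id y).const_mul c
    exact (h1.pow (2 * n)).const_mul (pcoef β n)
  have hbound : ∀ n y, y ∈ Metric.ball (0:ℝ) (|x| + 1) → ‖g' n y‖ ≤ u n := by
    intro n y hy
    have hyx : |y| ≤ |x| + 1 := by
      have := Metric.mem_ball.1 hy
      rw [Real.dist_eq, sub_zero] at this
      linarith
    have hcyB : |c * y| ≤ B := by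
      rw [abs_mul]
      calc |c| * |y| ≤ |c| * (|x| + 1) := by
            exact mul_le_mul_of_nonneg_left hyx (abs_nonneg c)
        _ ≤ B := le_max_right _ _
    have hpow : |c * y| ^ (2 * n - 1) ≤ A ^ n := by
      calc |c * y| ^ (2 * n - 1) ≤ B ^ (2 * n - 1) :=
            pow_le_pow_left₀ (abs_nonneg _) hcyB _
        _ ≤ B ^ (2 * n) := pow_le_pow_right₀ hB1 (Nat.sub_le _ _)
        _ = A ^ n := by rw [hA, ← pow_mul]
    have hp := (pcoef_pos hβ n).le
    rw [hg'_def]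
    simp only [Real.norm_eq_abs]
    rw [abs_mul, abs_mul, abs_mul, abs_of_nonneg hp, abs_pow]
    have h2n : |((2 * n : ℕ) : ℝ)| ≤ 2 * (n:ℝ) + 2 := by
      rw [abs_of_nonneg (by positivity)]; push_cast; linarith
    calc pcoef β n * (|((2 * n : ℕ) : ℝ)| * |c * y| ^ (2 * n - 1) * |c|)
        ≤ pcoef β n * ((2 * (n:ℝ) + 2) * A ^ n * |c|) := by
          apply mul_le_mul_of_nonneg_left _ hp
          apply mul_le_mul_of_nonneg_right _ (abs_nonneg c)
          exact mul_le_mul h2n hpow (pow_nonneg (abs_nonneg _) _) (by positivity)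
      _ = u n := by rw [hu_def]; ring
  have hg0 : Summable fun n => g n 0 := by
    apply summable_of_ne_finset_zero (s := {0})
    intro n hn
    have hn0 : n ≠ 0 := by simpa using hn
    simp [hg_def, zero_pow (by omega : 2 * n ≠ 0)]
  have hx_mem : x ∈ Metric.ball (0:ℝ) (|x| + 1) := by
    rw [Metric.mem_ball, Real.dist_eq, sub_zero]
    linarith [abs_nonneg x]
  have h0_mem : (0:ℝ) ∈ Metric.ball (0:ℝ) (|x| + 1) := by
    rw [Metric.mem_ball, dist_self]
    linarith [abs_nonneg x]
  have main := hasDerivAt_tsum_of_isPreconnected hu Metric.isOpen_ball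
    (convex_ball (0:ℝ) (|x|+1)).isPreconnected hg hbound h0_mem hg0 hx_mem
  have hsum_eq : (∑' n, g' n x) = c ^ 2 * x * pf (β + 1) c x := by
    have hsummable : Summable fun n => g' n x :=
      Summable.of_norm_bounded hu (fun n => hbound n x hx_mem)
    rw [Summable.tsum_eq_zero_add hsummable]
    have h0 : g' 0 x = 0 := by simp [hg'_def]
    rw [h0, zero_add]
    have hterm : ∀ m : ℕ, g' (m+1) x = c ^ 2 * x * (pcoef (β+1) m * (c * x) ^ (2 * m)) := by
      intro m
      show pcoef β (m+1) * (((2 * (m+1) : ℕ) : ℝ) * (c * x) ^ (2 * (m+1) - 1) * c)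
        = c ^ 2 * x * (pcoef (β+1) m * (c * x) ^ (2 * m))
      have he : 2 * (m + 1) - 1 = 2 * m + 1 := by omega
      have hcast : ((2 * (m + 1) : ℕ) : ℝ) = 2 * ((m:ℝ) + 1) := by push_cast; ring
      rw [he, hcast, pow_succ]
      rw [← pcoef_shift hβ m]
      ring
    calc ∑' m, g' (m+1) x = ∑' m, c ^ 2 * x * (pcoef (β+1) m * (c * x) ^ (2 * m)) :=
          tsum_congr hterm
      _ = c ^ 2 * x * pf (β+1) c x := tsum_mul_left
  rw [← hsum_eq]
  exact main


noncomputable def Er (j n : ℕ) : ℝ := if 2 * n ≤ j then Econst j n else 0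

lemma Econst_eq (N l k : ℕ) (h : N = 2 * l + k) :
    Econst N l = 2 ^ k * (N.factorial : ℝ) / (l.factorial * k.factorial) := by
  have hk : N - 2 * l = k := by omega
  rw [Econst, hk]

lemma Er_rec0 (j : ℕ) : Er (j + 1) 0 = 2 * Er j 0 := by
  have h1 := Econst_eq (j+1) 0 (j+1) (by omega)
  have h2 := Econst_eq j 0 j (by omega)
  simp only [Er, if_pos (by omega : 2 * 0 ≤ j + 1), if_pos (by omega : 2 * 0 ≤ j)]
  rw [h1, h2]
  have hfj : ((j.factorial : ℕ) : ℝ) ≠ 0 := by exact_mod_cast j.factorial_ne_zero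
  have hfj1 : (((j+1).factorial : ℕ) : ℝ) = ((j:ℝ)+1) * j.factorial := by
    rw [Nat.factorial_succ]; push_cast; ring
  rw [hfj1, pow_succ]
  simp [Nat.factorial_zero]
  field_simp

lemma Er_rec (j m : ℕ) : Er (j + 1) (m + 1) = 2 * Er j (m + 1) + ((j:ℝ) - 2 * m) * Er j m := by
  rcases le_or_gt (2 * m + 2) j with h | h
  · -- main case
    obtain ⟨d, hd⟩ : ∃ d, j = 2 * m + 2 + d := ⟨j - (2*m+2), by omega⟩
    subst hd
    simp only [Er, if_pos (by omega : 2 * (m+1) ≤ 2*m+2+d + 1),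
      if_pos (by omega : 2 * (m+1) ≤ 2*m+2+d), if_pos (by omega : 2 * m ≤ 2*m+2+d)]
    rw [Econst_eq (2*m+2+d+1) (m+1) (d+1) (by omega),
      Econst_eq (2*m+2+d) (m+1) d (by omega),
      Econst_eq (2*m+2+d) m (d+2) (by omega)]
    have e1 : (((2*m+2+d+1).factorial : ℕ) : ℝ) = (2*(m:ℝ)+3+d) * (2*m+2+d).factorial := by
      rw [Nat.factorial_succ]; push_cast; ring
    have e2 : (((m+1).factorial : ℕ) : ℝ) = ((m:ℝ)+1) * m.factorial := by
      rw [Nat.factorial_succ]; push_cast; ring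
    have e3 : (((d+1).factorial : ℕ) : ℝ) = ((d:ℝ)+1) * d.factorial := by
      rw [Nat.factorial_succ]; push_cast; ring
    have e4 : (((d+2).factorial : ℕ) : ℝ) = ((d:ℝ)+2) * (((d:ℝ)+1) * d.factorial) := by
      rw [show d+2 = (d+1)+1 from rfl, Nat.factorial_succ, Nat.factorial_succ]; push_cast; ring
    have hfm : ((m.factorial : ℕ) : ℝ) ≠ 0 := by exact_mod_cast m.factorial_ne_zero
    have hfd : ((d.factorial : ℕ) : ℝ) ≠ 0 := by exact_mod_cast d.factorial_ne_zero
    have hm1 : ((m:ℝ)+1) ≠ 0 := by positivity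
    have hd1 : ((d:ℝ)+1) ≠ 0 := by positivity
    have hd2 : ((d:ℝ)+2) ≠ 0 := by positivity
    rw [e1, e2, e3, e4]
    push_cast
    field_simp
    ring
  · rcases le_or_gt (2 * m + 1) j with h2 | h3
    · -- j = 2m+1
      have hj : j = 2 * m + 1 := by omega
      subst hj
      simp only [Er, if_pos (by omega : 2 * (m+1) ≤ 2*m+1 + 1),
        if_neg (by omega : ¬ (2 * (m+1) ≤ 2*m+1)), if_pos (by omega : 2 * m ≤ 2*m+1)]
      rw [Econst_eq (2*m+1+1) (m+1) 0 (by omega), Econst_eq (2*m+1) m 1 (by omega)]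
      have e1 : (((2*m+1+1).factorial : ℕ) : ℝ) = (2*(m:ℝ)+2) * (2*m+1).factorial := by
        rw [Nat.factorial_succ]; push_cast; ring
      have e2 : (((m+1).factorial : ℕ) : ℝ) = ((m:ℝ)+1) * m.factorial := by
        rw [Nat.factorial_succ]; push_cast; ring
      have hfm : ((m.factorial : ℕ) : ℝ) ≠ 0 := by exact_mod_cast m.factorial_ne_zero
      have hf2 : (((2*m+1).factorial : ℕ) : ℝ) ≠ 0 := by exact_mod_cast (2*m+1).factorial_ne_zero
      rw [e1, e2]
      simp [Nat.factorial_zero, Nat.factorial_one]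
      have hm1 : ((m:ℝ)+1) ≠ 0 := by positivity
      field_simp
    · -- j ≤ 2m
      rcases Nat.lt_or_ge j (2*m) with h4 | h5
      · simp only [Er, if_neg (by omega : ¬ (2 * (m+1) ≤ j + 1)),
          if_neg (by omega : ¬ (2 * (m+1) ≤ j)), if_neg (by omega : ¬ (2 * m ≤ j))]
        ring
      · have hj : j = 2 * m := by omega
        subst hj
        simp only [Er, if_neg (by omega : ¬ (2 * (m+1) ≤ 2*m + 1)),
          if_neg (by omega : ¬ (2 * (m+1) ≤ 2*m))]
        push_cast
        ring

lemma pf_iteratedDeriv {β : ℝ} (hβ : -1 < β) (c : ℝ) (j : ℕ) (x : ℝ) :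
    iteratedDeriv j (pf β c) x = ∑ n ∈ Finset.range (j / 2 + 1),
      Er j n * (x ^ (j - 2 * n) / 2 ^ (j - n)) * c ^ (2 * (j - n)) *
        pf (β + ((j - n : ℕ) : ℝ)) c x := by
  induction j generalizing x with
  | zero => simp [Er, Econst]
  | succ j IH =>
    have hfun : iteratedDeriv j (pf β c) = fun z => ∑ n ∈ Finset.range (j / 2 + 1),
        Er j n * (z ^ (j - 2 * n) / 2 ^ (j - n)) * c ^ (2 * (j - n)) *
          pf (β + ((j - n : ℕ) : ℝ)) c z := funext fun z => IH z
    rw [iteratedDeriv_succ, hfun]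
    -- derivative of each term
    set γ : ℕ → ℝ := fun n => β + ((j - n : ℕ) : ℝ) with hγdef
    have hγ : ∀ n, -1 < γ n := by
      intro n
      have : (0:ℝ) ≤ ((j - n : ℕ) : ℝ) := Nat.cast_nonneg _
      simp only [hγdef]; linarith
    set D : ℕ → ℝ := fun n =>
      (Er j n * ((((j - 2*n : ℕ) : ℝ)) * x ^ (j - 2*n - 1) / 2 ^ (j - n)) * c ^ (2 * (j - n))) *
        pf (γ n) c x +
      (Er j n * (x ^ (j - 2*n) / 2 ^ (j - n)) * c ^ (2 * (j - n))) *
        (c ^ 2 * x * pf (γ n + 1) c x) with hDdef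
    have hder : HasDerivAt (fun z => ∑ n ∈ Finset.range (j / 2 + 1),
        Er j n * (z ^ (j - 2 * n) / 2 ^ (j - n)) * c ^ (2 * (j - n)) *
          pf (β + ((j - n : ℕ) : ℝ)) c z) (∑ n ∈ Finset.range (j / 2 + 1), D n) x := by
      apply HasDerivAt.fun_sum
      intro n _
      exact ((((hasDerivAt_pow (j - 2*n) x).div_const ((2:ℝ) ^ (j - n))).const_mul
        (Er j n)).mul_const ((c:ℝ) ^ (2 * (j - n)))).mul (pf_hasDerivAt (hγ n) c x)
    rw [hder.deriv]
    -- now the combinatorial rearrangement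
    set P2 : ℕ → ℝ := fun m =>
      (x ^ (j + 1 - 2 * m) / 2 ^ (j + 1 - m)) * c ^ (2 * (j + 1 - m)) *
        pf (β + ((j + 1 - m : ℕ) : ℝ)) c x with hP2def
    have claimA : ∀ n ∈ Finset.range (j / 2 + 1),
        D n = 2 * Er j n * P2 n + ((j:ℝ) - 2 * n) * Er j n * P2 (n + 1) := by
      intro n hn
      have h2n : 2 * n ≤ j := by
        have := Finset.mem_range.1 hn
        omega
      have hcast : (((j - 2*n : ℕ)) : ℝ) = (j:ℝ) - 2 * n := by
        push_cast [Nat.cast_sub h2n]; ring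
      have he1 : j + 1 - 2 * (n + 1) = j - 2*n - 1 := by omega
      have he2 : j + 1 - (n + 1) = j - n := by omega
      have he3 : j + 1 - 2 * n = (j - 2*n) + 1 := by omega
      have he4 : j + 1 - n = (j - n) + 1 := by omega
      have he5 : ((j + 1 - n : ℕ) : ℝ) = ((j - n : ℕ) : ℝ) + 1 := by rw [he4]; push_cast; ring
      have hγ1 : γ n + 1 = β + ((j + 1 - n : ℕ) : ℝ) := by rw [hγdef, he5]; ring
      rw [hDdef, hP2def]
      simp only [he1, he2, he3, he4, he5, hcast, hγ1]
      rw [pow_succ x (j - 2*n), pow_succ (2:ℝ) (j - n)]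
      have hc2 : c ^ (2 * ((j - n) + 1)) = c ^ (2 * (j - n)) * c ^ 2 := by
        rw [← pow_add]
        congr 1
      rw [hc2, hγdef]
      ring
    rw [Finset.sum_congr rfl claimA, Finset.sum_add_distrib]
    -- first sum: pad to range (j/2+2)
    have hpad1 : ∑ n ∈ Finset.range (j / 2 + 1), 2 * Er j n * P2 n
        = ∑ m ∈ Finset.range (j / 2 + 2), 2 * Er j m * P2 m := by
      rw [Finset.sum_range_succ (n := j / 2 + 1)]
      have : Er j (j / 2 + 1) = 0 := by
        rw [Er, if_neg]; omega
      rw [this]; ring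
    -- second sum: shift index
    set q : ℕ → ℝ := fun m => if m = 0 then 0 else ((j:ℝ) - 2 * (m - 1 : ℕ)) * Er j (m - 1) * P2 m
      with hqdef
    have hq : ∀ n, ((j:ℝ) - 2 * n) * Er j n * P2 (n + 1) = q (n + 1) := by
      intro n
      rw [hqdef]
      simp
    have hpad2 : ∑ n ∈ Finset.range (j / 2 + 1), ((j:ℝ) - 2 * n) * Er j n * P2 (n + 1)
        = ∑ m ∈ Finset.range (j / 2 + 2), q m := by
      rw [Finset.sum_range_succ' (f := q) (n := j / 2 + 1)]
      simp only [hq]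
      rw [hqdef]
      simp
    rw [hpad1, hpad2, ← Finset.sum_add_distrib]
    have hcomb : ∀ m ∈ Finset.range (j / 2 + 2),
        2 * Er j m * P2 m + q m = Er (j + 1) m * P2 m := by
      intro m _
      cases m with
      | zero =>
        have hq0 : q 0 = 0 := by simp [hqdef]
        rw [hq0, add_zero, Er_rec0]
      | succ n =>
        rw [← hq n, Er_rec]
        ring
    rw [Finset.sum_congr rfl hcomb]
    -- finally, shrink range (j/2+2) to range ((j+1)/2+1)
    have hshrink : ∑ m ∈ Finset.range (j / 2 + 2), Er (j+1) m * P2 m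
        = ∑ m ∈ Finset.range ((j+1) / 2 + 1), Er (j+1) m * P2 m := by
      symm
      apply Finset.sum_subset
      · apply Finset.range_subset_range.2; omega
      · intro m _ hm
        have hm' : ¬ m < (j+1)/2 + 1 := by simpa using hm
        have : Er (j+1) m = 0 := by rw [Er, if_neg]; omega
        rw [this, zero_mul]
    rw [hshrink]
    apply Finset.sum_congr rfl
    intro n _
    rw [hP2def]
    ring


lemma pf_eq_besselI (β : ℝ) {c x : ℝ} (h : 0 < c * x) :
    pf β c x = (c * x) ^ (-β) * besselI β (c * x) := by
  rw [pf, besselI, ← tsum_mul_left]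
  apply tsum_congr
  intro n
  set z := c * x with hz
  have hz2 : 0 < z / 2 := by positivity
  have h1 : (z / 2) ^ (2 * (n:ℝ) + β) = (z / 2) ^ (2 * n : ℕ) * (z / 2) ^ β := by
    rw [Real.rpow_add hz2]
    congr 1
    rw [← Real.rpow_natCast (z/2) (2*n)]
    congr 1
    push_cast
    ring
  have h2 : (z / 2) ^ β = z ^ β * (2:ℝ) ^ (-β) := by
    rw [Real.div_rpow h.le (by norm_num : (0:ℝ) ≤ 2), Real.rpow_neg (by norm_num : (0:ℝ) ≤ 2)]
    ring
  have h3 : (z / 2) ^ (2 * n : ℕ) = z ^ (2 * n) / 4 ^ n := by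
    rw [div_pow]
    congr 1
    rw [pow_mul]
    norm_num
  have h4 : z ^ (-β) * z ^ β = 1 := by
    rw [← Real.rpow_add h]
    norm_num
  rw [h1, h2, h3, pcoef]
  have hzb : (0:ℝ) < z ^ β := Real.rpow_pos_of_pos h β
  have hzbn : z ^ (-β) = (z ^ β)⁻¹ := by
    rw [Real.rpow_neg h.le]
  rw [hzbn] at h4 ⊢
  linear_combination (-(2:ℝ)^(-β) * z^(2*n) / (4^n * n.factorial * Real.Gamma ((n:ℝ) + β + 1))) * h4

end BesselAux

/-- the `j`-th `x`-derivative of `u^{-α} I_α(u)` with `u = 2xy e^{-t}/(1-e^{-2t})`. -/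
theorem iteratedDeriv_bessel_formula (α : ℝ) (hα : -1 < α) (j : ℕ) (t x y : ℝ)
    (ht : 0 < t) (hx : 0 < x) (hy : 0 < y) :
    iteratedDeriv j
      (fun u : ℝ =>
        (2 * u * y * Real.exp (-t) / (1 - Real.exp (-2 * t))) ^ (-α) *
          besselI α (2 * u * y * Real.exp (-t) / (1 - Real.exp (-2 * t)))) x =
    ∑ n ∈ Finset.range (j / 2 + 1),
      Econst j n * (x ^ (j - 2 * n) / 2 ^ (j - n)) *
        (2 * y * Real.exp (-t) / (1 - Real.exp (-2 * t))) ^ (2 * (j - n)) *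
        (2 * x * y * Real.exp (-t) / (1 - Real.exp (-2 * t))) ^ (-α + (n : ℝ) - (j : ℝ)) *
        besselI (α - n + j) (2 * x * y * Real.exp (-t) / (1 - Real.exp (-2 * t))) := by
  have hD : 0 < 1 - Real.exp (-2 * t) := by
    have h1 : Real.exp (-2 * t) < Real.exp 0 := Real.exp_lt_exp.2 (by linarith)
    rw [Real.exp_zero] at h1
    linarith
  set c : ℝ := 2 * y * Real.exp (-t) / (1 - Real.exp (-2 * t)) with hc
  have hcpos : 0 < c := by
    rw [hc]
    have := Real.exp_pos (-t)
    positivity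
  have hfeq : (fun u : ℝ =>
        (2 * u * y * Real.exp (-t) / (1 - Real.exp (-2 * t))) ^ (-α) *
          besselI α (2 * u * y * Real.exp (-t) / (1 - Real.exp (-2 * t)))) =ᶠ[𝓝 x]
      pf α c := by
    filter_upwards [isOpen_Ioi.mem_nhds (Set.mem_Ioi.2 hx)] with u hu
    have hu0 : 0 < u := Set.mem_Ioi.1 hu
    have harg : 2 * u * y * Real.exp (-t) / (1 - Real.exp (-2 * t)) = c * u := by
      rw [hc]; ring
    rw [harg, (pf_eq_besselI α (by positivity : (0:ℝ) < c * u)).symm]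
  rw [Filter.EventuallyEq.iteratedDeriv_eq j hfeq, pf_iteratedDeriv hα c j x]
  apply Finset.sum_congr rfl
  intro n hn
  have h2n : 2 * n ≤ j := by
    have := Finset.mem_range.1 hn
    omega
  have hnj : n ≤ j := by omega
  have hcx : 2 * x * y * Real.exp (-t) / (1 - Real.exp (-2 * t)) = c * x := by
    rw [hc]; ring
  rw [hcx]
  have hγ : α + ((j - n : ℕ) : ℝ) = α - n + j := by
    push_cast [Nat.cast_sub hnj]; ring
  have hexp : -(α + ((j - n : ℕ) : ℝ)) = -α + (n:ℝ) - j := by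
    push_cast [Nat.cast_sub hnj]; ring
  rw [Er, if_pos h2n, pf_eq_besselI _ (by positivity : (0:ℝ) < c * x), hexp, hγ]
  ring
end
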